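/- If G is an (m1+2m2)-tree-connected graph and m2 ≥ k0 ≥ 0, then G can be decomposed into two factors G1 and G2 such that G1 is m1-tree-connected, the induced bipartite factor G2[X,Y] is m2-tree-connected for some bipartition X, Y of V(G), and e_{G2}(X) + e_{G2}(Y) = min{k0, bi(G)}. -/

import Mathlib

open Finset

variable {V E : Type*}

/-- Degree of vertex `v` in the multigraph whose edge set is `S`
(the ambient multigraph is given by the endpoint map `ends`); a loop counts twice. -/
def mdeg [DecidableEq V] (ends : E → V × V) (S : Finset E) (v : V) : ℕ :=
  ∑ e ∈ S, ((if (ends e).1 = v then 1 else 0) + (if (ends e).2 = v then 1 else 0))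

/-- The multigraph with edge set `S` is connected: all vertices are mutually reachable. -/
def MConnected (ends : E → V × V) (S : Finset E) : Prop :=
  ∀ u v : V, Relation.ReflTransGen
    (fun a b => ∃ e ∈ S, ends e = (a, b) ∨ ends e = (b, a)) u v

/-- `T` is (the edge set of) a spanning tree: connected and with `|V| - 1` edges. -/
def IsSpanningTree [Fintype V] (ends : E → V × V) (T : Finset E) : Prop :=
  MConnected ends T ∧ T.card + 1 = Fintype.card V

/-- `S` is `m`-tree-connected: it contains `m` pairwise edge-disjoint spanning trees. -/
def TreeConnected [Fintype V] (ends : E → V × V) (m : ℕ) (S : Finset E) : Prop :=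
  ∃ T : Fin m → Finset E, (∀ i, T i ⊆ S ∧ IsSpanningTree ends (T i)) ∧
    ∀ i j, i ≠ j → Disjoint (T i) (T j)

/-- The edges of `S` crossing the cut `(A, Aᶜ)`. -/
def cutEdges [DecidableEq V] (ends : E → V × V) (S : Finset E) (A : Finset V) : Finset E :=
  S.filter fun e => ¬(((ends e).1 ∈ A) ↔ ((ends e).2 ∈ A))

/-- `S` is `m`-edge-connected: every edge cut has at least `m` edges. -/
def EdgeConnected [Fintype V] [DecidableEq V] (ends : E → V × V) (m : ℕ) (S : Finset E) : Prop :=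
  ∀ A : Finset V, A.Nonempty → A ≠ Finset.univ → m ≤ (cutEdges ends S A).card

/-- Tail of the edge `e` under the orientation `σ`. -/
def otail (ends : E → V × V) (σ : E → Bool) (e : E) : V :=
  if σ e then (ends e).1 else (ends e).2

/-- Head of the edge `e` under the orientation `σ`. -/
def ohead (ends : E → V × V) (σ : E → Bool) (e : E) : V :=
  if σ e then (ends e).2 else (ends e).1

/-- Out-degree of `v` in the edge set `S` under the orientation `σ`. -/
def outDeg [DecidableEq V] (ends : E → V × V) (σ : E → Bool) (S : Finset E) (v : V) : ℕ :=
  (S.filter fun e => otail ends σ e = v).card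

/-- In-degree of `v` in the edge set `S` under the orientation `σ`. -/
def inDeg [DecidableEq V] (ends : E → V × V) (σ : E → Bool) (S : Finset E) (v : V) : ℕ :=
  (S.filter fun e => ohead ends σ e = v).card

/-- Out-degree in a directed graph, where `ends` itself records the orientation
(first component = tail, second component = head). -/
def outDegD [DecidableEq V] (ends : E → V × V) (S : Finset E) (v : V) : ℕ :=
  (S.filter fun e => (ends e).1 = v).card

/-- In-degree in a directed graph. -/
def inDegD [DecidableEq V] (ends : E → V × V) (S : Finset E) (v : V) : ℕ :=
  (S.filter fun e => (ends e).2 = v).card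

/-- `S` is `(m, l)`-partition-connected: it decomposes into an `m`-tree-connected factor
and a factor admitting an orientation in which every vertex `v` has out-degree at least `l v`. -/
def PartitionConnected [Fintype V] [DecidableEq V] [DecidableEq E]
    (ends : E → V × V) (m : ℕ) (l : V → ℤ) (S : Finset E) : Prop :=
  ∃ S₁ ⊆ S, TreeConnected ends m S₁ ∧
    ∃ σ : E → Bool, ∀ v, l v ≤ (outDeg ends σ (S \ S₁) v : ℤ)

/-- Number of edges of `S` with both ends in `A`. -/
def eIn [DecidableEq V] (ends : E → V × V) (S : Finset E) (A : Finset V) : ℕ :=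
  (S.filter fun e => (ends e).1 ∈ A ∧ (ends e).2 ∈ A).card

/-- Number of edges of `S` with one end in `A` and the other end in `B`. -/
def eBetween [DecidableEq V] (ends : E → V × V) (S : Finset E) (A B : Finset V) : ℕ :=
  (S.filter fun e =>
    ((ends e).1 ∈ A ∧ (ends e).2 ∈ B) ∨ ((ends e).1 ∈ B ∧ (ends e).2 ∈ A)).card

/-- Every edge of `S` crosses the bipartition `(X, Xᶜ)`. -/
def BipartiteWrt [DecidableEq V] (ends : E → V × V) (S : Finset E) (X : Finset V) : Prop :=
  ∀ e ∈ S, ¬(((ends e).1 ∈ X) ↔ ((ends e).2 ∈ X))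

/-- The multigraph with edge set `S` is bipartite. -/
def IsBipartiteG [DecidableEq V] (ends : E → V × V) (S : Finset E) : Prop :=
  ∃ X : Finset V, BipartiteWrt ends S X

/-- Bipartite index: the smallest number of edges whose deletion from `S`
leaves a bipartite factor. -/
noncomputable def biIndex [DecidableEq V] [DecidableEq E]
    (ends : E → V × V) (S : Finset E) : ℕ :=
  sInf {n | ∃ H ⊆ S, IsBipartiteG ends H ∧ n = (S \ H).card}

/-- `f : V → ZMod k` is compatible with the multigraph `S` with respect to the
bipartition `(X, Xᶜ)`. -/
def CompatibleWrt [Fintype V] [DecidableEq V] (ends : E → V × V) (S : Finset E)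
    {k : ℕ} (f : V → ZMod k) (X : Finset V) : Prop :=
  (∃ x : ℕ, x ≤ eIn ends S X ∧
    (∑ v ∈ X, f v) - 2 * (x : ZMod k) = ∑ v ∈ Xᶜ, f v) ∨
  (∃ y : ℕ, y ≤ eIn ends S Xᶜ ∧
    (∑ v ∈ X, f v) = (∑ v ∈ Xᶜ, f v) - 2 * (y : ZMod k))

/-- `f : V → ZMod k` is compatible with `S`: compatible with respect to every bipartition. -/
def Compatible [Fintype V] [DecidableEq V] (ends : E → V × V) (S : Finset E)
    {k : ℕ} (f : V → ZMod k) : Prop :=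
  ∀ X : Finset V, CompatibleWrt ends S f X
set_option linter.unusedSectionVars false
set_option linter.unusedVariables false
section Conn
variable [Fintype V] [DecidableEq V] [Fintype E] [DecidableEq E] (ends : E → V × V)

open scoped Classical

/-- one edge step -/
def estep (S : Finset E) (a b : V) : Prop := ∃ e ∈ S, ends e = (a, b) ∨ ends e = (b, a)

/-- connectivity relation -/
def conn (S : Finset E) : V → V → Prop := Relation.ReflTransGen (estep ends S)

variable {ends}

lemma estep_symm {S : Finset E} : Symmetric (estep ends S) := by
  rintro a b ⟨e, he, h | h⟩ <;> exact ⟨e, he, by tauto⟩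

lemma conn_refl (S : Finset E) (a : V) : conn ends S a a := Relation.ReflTransGen.refl

lemma conn_symm {S : Finset E} {a b : V} (h : conn ends S a b) : conn ends S b a :=
  by haveI : Std.Symm (estep ends S) := ⟨estep_symm⟩; exact (Relation.ReflTransGen.stdSymm (r := estep ends S)).symm _ _ h

lemma conn_trans {S : Finset E} {a b c : V} (h : conn ends S a b) (h' : conn ends S b c) :
    conn ends S a c := Relation.ReflTransGen.trans h h'

lemma conn_single {S : Finset E} {e : E} (he : e ∈ S) : conn ends S (ends e).1 (ends e).2 :=
  Relation.ReflTransGen.single ⟨e, he, Or.inl rfl⟩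

lemma conn_of_forall_step {S T : Finset E} (h : ∀ e ∈ S, conn ends T (ends e).1 (ends e).2)
    {a b : V} (hab : conn ends S a b) : conn ends T a b := by
  induction hab with
  | refl => exact conn_refl _ _
  | @tail x y _ hstep ih =>
    rcases hstep with ⟨e, he, h' | h'⟩
    · have h2 := h e he
      rw [h'] at h2
      exact conn_trans ih h2
    · have h2 := h e he
      rw [h'] at h2
      exact conn_trans ih (conn_symm h2)

lemma conn_mono {S T : Finset E} (hST : S ⊆ T) {a b : V} (h : conn ends S a b) :
    conn ends T a b :=
  conn_of_forall_step (fun e he => conn_single (hST he)) h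

lemma estep_insert {S : Finset E} {e : E} {a b : V} (h : estep ends (insert e S) a b) :
    estep ends S a b ∨ (a = (ends e).1 ∧ b = (ends e).2) ∨ (a = (ends e).2 ∧ b = (ends e).1) := by
  rcases h with ⟨f, hf, hor⟩
  rcases Finset.mem_insert.mp hf with rfl | hfS
  · rcases hor with h' | h' <;> rw [h'] <;> simp
  · exact Or.inl ⟨f, hfS, hor⟩

/-- the workhorse: connectivity after inserting one edge -/
lemma conn_insert_iff {S : Finset E} {e : E} {a b : V} :
    conn ends (insert e S) a b ↔ conn ends S a b ∨
      (conn ends S a (ends e).1 ∧ conn ends S (ends e).2 b) ∨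
      (conn ends S a (ends e).2 ∧ conn ends S (ends e).1 b) := by
  constructor
  · intro h
    induction h with
    | refl => exact Or.inl (conn_refl _ _)
    | @tail x y _ hstep ih =>
      rcases estep_insert hstep with h' | ⟨h1', h2'⟩ | ⟨h1', h2'⟩
      · rcases ih with h1 | ⟨h1, h2⟩ | ⟨h1, h2⟩
        · exact Or.inl (conn_trans h1 (Relation.ReflTransGen.single h'))
        · exact Or.inr (Or.inl ⟨h1, conn_trans h2 (Relation.ReflTransGen.single h')⟩)
        · exact Or.inr (Or.inr ⟨h1, conn_trans h2 (Relation.ReflTransGen.single h')⟩)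
      · subst h1'; subst h2'
        rcases ih with h1 | ⟨h1, h2⟩ | ⟨h1, h2⟩
        · exact Or.inr (Or.inl ⟨h1, conn_refl _ _⟩)
        · exact Or.inr (Or.inl ⟨h1, conn_refl _ _⟩)
        · exact Or.inl h1
      · subst h1'; subst h2'
        rcases ih with h1 | ⟨h1, h2⟩ | ⟨h1, h2⟩
        · exact Or.inr (Or.inr ⟨h1, conn_refl _ _⟩)
        · exact Or.inl h1
        · exact Or.inr (Or.inr ⟨h1, conn_refl _ _⟩)
  · have hsub : ∀ x y, conn ends S x y → conn ends (insert e S) x y :=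
      fun x y h => conn_mono (Finset.subset_insert _ _) h
    have he : conn ends (insert e S) (ends e).1 (ends e).2 :=
      conn_single (Finset.mem_insert_self _ _)
    rintro (h | ⟨h1, h2⟩ | ⟨h1, h2⟩)
    · exact hsub _ _ h
    · exact conn_trans (hsub _ _ h1) (conn_trans he (hsub _ _ h2))
    · exact conn_trans (hsub _ _ h1) (conn_trans (conn_symm he) (hsub _ _ h2))

variable (ends)

/-- the setoid of connectivity -/
def connSetoid (S : Finset E) : Setoid V :=
  ⟨conn ends S, ⟨conn_refl S, conn_symm, conn_trans⟩⟩

/-- number of connected components -/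
noncomputable def ncomp (S : Finset E) : ℕ := Nat.card (Quotient (connSetoid ends S))

variable {ends}

/-- canonical map between quotients -/
def connMap (S T : Finset E) (h : ∀ a b, conn ends S a b → conn ends T a b) :
    Quotient (connSetoid ends S) → Quotient (connSetoid ends T) :=
  Quotient.lift (fun a => Quotient.mk (connSetoid ends T) a)
    (fun a b hab => Quotient.sound (h a b hab))

lemma connMap_surj {S T : Finset E} (h : ∀ a b, conn ends S a b → conn ends T a b) :
    Function.Surjective (connMap S T h) := by
  intro q; obtain ⟨v, rfl⟩ := Quotient.exists_rep q
  exact ⟨Quotient.mk (connSetoid ends S) v, rfl⟩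

lemma ncomp_le_of_le {S T : Finset E} (h : ∀ a b, conn ends S a b → conn ends T a b) :
    ncomp ends T ≤ ncomp ends S :=
  Nat.card_le_card_of_surjective _ (connMap_surj h)

lemma ncomp_congr {S T : Finset E} (h : ∀ a b, conn ends S a b ↔ conn ends T a b) :
    ncomp ends S = ncomp ends T :=
  le_antisymm (ncomp_le_of_le fun a b => (h a b).mpr) (ncomp_le_of_le fun a b => (h a b).mp)

lemma ncomp_lt {S T : Finset E} (h : ∀ a b, conn ends S a b → conn ends T a b)
    {u v : V} (huv : conn ends T u v) (hnuv : ¬ conn ends S u v) :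
    ncomp ends T < ncomp ends S := by
  refine lt_of_le_of_ne (ncomp_le_of_le h) ?_
  intro heq
  letI : Fintype (Quotient (connSetoid ends S)) := Fintype.ofFinite _
  letI : Fintype (Quotient (connSetoid ends T)) := Fintype.ofFinite _
  have hcard : Fintype.card (Quotient (connSetoid ends T)) =
      Fintype.card (Quotient (connSetoid ends S)) := by
    have h1 := Nat.card_eq_fintype_card (α := Quotient (connSetoid ends S))
    have h2 := Nat.card_eq_fintype_card (α := Quotient (connSetoid ends T))
    rw [ncomp, ncomp] at heq
    omega
  have hinj : Function.Injective (connMap S T h) :=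
    ((Fintype.bijective_iff_surjective_and_card _).mpr ⟨connMap_surj h, hcard.symm⟩).1
  have : Quotient.mk (connSetoid ends S) u = Quotient.mk (connSetoid ends S) v := by
    apply hinj
    exact Quotient.sound huv
  exact hnuv (Quotient.exact this)

lemma ncomp_pos [Nonempty V] (S : Finset E) : 0 < ncomp ends S := by
  have : Nonempty (Quotient (connSetoid ends S)) :=
    ⟨Quotient.mk (connSetoid ends S) (Classical.arbitrary V)⟩
  exact Nat.card_pos

lemma ncomp_empty : ncomp ends (∅ : Finset E) = Fintype.card V := by
  have hconn : ∀ a b : V, conn ends ∅ a b → a = b := by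
    intro a b h
    induction h with
    | refl => rfl
    | tail _ hstep ih => rcases hstep with ⟨e, he, _⟩; exact absurd he (Finset.notMem_empty e)
  have hbij : Function.Bijective (Quotient.mk (connSetoid ends ∅)) := by
    constructor
    · intro a b hab
      exact hconn a b (Quotient.exact hab)
    · intro q; exact Quotient.exists_rep q
  rw [ncomp, ← Nat.card_eq_fintype_card]
  exact (Nat.card_eq_of_bijective _ hbij).symm

lemma ncomp_insert_le (S : Finset E) (e : E) :
    ncomp ends S ≤ ncomp ends (insert e S) + 1 := by
  letI : Fintype (Quotient (connSetoid ends S)) := Fintype.ofFinite _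
  letI : Fintype (Quotient (connSetoid ends (insert e S))) := Fintype.ofFinite _
  set f := connMap (ends := ends) S (insert e S)
    (fun a b hab => conn_mono (Finset.subset_insert _ _) hab) with hfdef
  have hinj : Set.InjOn f
      ((Finset.univ.erase (Quotient.mk (connSetoid ends S) (ends e).2)) : Finset _) := by
    intro q hq q' hq' hfe
    obtain ⟨a, rfl⟩ := Quotient.exists_rep q
    obtain ⟨b, rfl⟩ := Quotient.exists_rep q'
    have hab : conn ends (insert e S) a b := Quotient.exact hfe
    rcases conn_insert_iff.mp hab with h | ⟨h1, h2⟩ | ⟨h1, h2⟩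
    · exact Quotient.sound h
    · exfalso
      exact (Finset.mem_erase.mp (by exact_mod_cast hq')).1 (Quotient.sound h2).symm
    · exfalso
      exact (Finset.mem_erase.mp (by exact_mod_cast hq)).1 (Quotient.sound h1)
  have hcard := Finset.card_le_card_of_injOn f (fun x _ => Finset.mem_univ (f x)) hinj
  have h1 : (Finset.univ.erase (Quotient.mk (connSetoid ends S) (ends e).2)).card =
      Fintype.card (Quotient (connSetoid ends S)) - 1 := by
    rw [Finset.card_erase_of_mem (Finset.mem_univ _), Finset.card_univ]
  have h2 : (Finset.univ : Finset (Quotient (connSetoid ends (insert e S)))).card =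
      Fintype.card (Quotient (connSetoid ends (insert e S))) := Finset.card_univ
  have h3 : 0 < Fintype.card (Quotient (connSetoid ends S)) :=
    Fintype.card_pos_iff.mpr ⟨Quotient.mk (connSetoid ends S) (ends e).2⟩
  rw [ncomp, ncomp, Nat.card_eq_fintype_card, Nat.card_eq_fintype_card]
  omega

lemma ncomp_insert_of_conn {S : Finset E} {e : E}
    (h : conn ends S (ends e).1 (ends e).2) :
    ncomp ends (insert e S) = ncomp ends S := by
  refine ncomp_congr fun a b => ?_
  rw [conn_insert_iff]
  constructor
  · rintro (h' | ⟨h1, h2⟩ | ⟨h1, h2⟩)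
    · exact h'
    · exact conn_trans h1 (conn_trans h h2)
    · exact conn_trans h1 (conn_trans (conn_symm h) h2)
  · exact Or.inl

lemma ncomp_insert_of_not_conn {S : Finset E} {e : E}
    (h : ¬ conn ends S (ends e).1 (ends e).2) :
    ncomp ends (insert e S) + 1 = ncomp ends S := by
  have h1 := ncomp_insert_le (ends := ends) S e
  have h2 : ncomp ends (insert e S) < ncomp ends S :=
    ncomp_lt (fun a b => conn_mono (Finset.subset_insert _ _))
      (conn_single (Finset.mem_insert_self _ _)) h
  omega

lemma card_le_ncomp_add_card (S : Finset E) :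
    Fintype.card V ≤ ncomp ends S + S.card := by
  induction S using Finset.induction_on with
  | empty => rw [ncomp_empty]; simp
  | @insert e S he ih =>
    have := ncomp_insert_le (ends := ends) S e
    rw [Finset.card_insert_of_notMem he]
    omega

end Conn

section Forest
variable [Fintype V] [DecidableEq V] [Fintype E] [DecidableEq E] {ends : E → V × V}

open scoped Classical

/-- forest predicate -/
def isForest (ends : E → V × V) (S : Finset E) : Prop :=
  ncomp ends S + S.card = Fintype.card V

lemma isForest_empty : isForest ends (∅ : Finset E) := by
  rw [isForest, ncomp_empty]; simp

lemma ncomp_le_union (A B : Finset E) :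
    ncomp ends A ≤ ncomp ends (A ∪ B) + B.card := by
  induction B using Finset.induction_on with
  | empty => simp
  | @insert e B he ih =>
    have h1 : A ∪ insert e B = insert e (A ∪ B) := Finset.union_insert e A B
    have h2 := ncomp_insert_le (ends := ends) (A ∪ B) e
    rw [h1, Finset.card_insert_of_notMem he]
    omega

lemma isForest_subset {F G : Finset E} (hF : isForest ends F) (hG : G ⊆ F) :
    isForest ends G := by
  have h1 : G ∪ (F \ G) = F := Finset.union_sdiff_of_subset hG
  have h2 := ncomp_le_union (ends := ends) G (F \ G)
  rw [h1] at h2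
  have h3 : (F \ G).card + G.card = F.card := by
    rw [Finset.card_sdiff_add_card_eq_card hG]
  have h4 := card_le_ncomp_add_card (ends := ends) G
  rw [isForest] at hF ⊢
  omega

lemma isForest_bridge {F : Finset E} (hF : isForest ends F) {y : E} (hy : y ∈ F) :
    ¬ conn ends (F.erase y) (ends y).1 (ends y).2 := by
  intro hc
  have h1 : insert y (F.erase y) = F := Finset.insert_erase hy
  have h2 := ncomp_insert_of_conn hc
  rw [h1] at h2
  have h3 : isForest ends (F.erase y) := isForest_subset hF (Finset.erase_subset _ _)
  rw [isForest] at hF h3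
  have h4 : (F.erase y).card + 1 = F.card := by
    rw [Finset.card_erase_of_mem hy]
    have : 0 < F.card := Finset.card_pos.mpr ⟨y, hy⟩
    omega
  omega

lemma isForest_insert {F : Finset E} (hF : isForest ends F) {e : E} (he : e ∉ F)
    (hc : ¬ conn ends F (ends e).1 (ends e).2) : isForest ends (insert e F) := by
  have h1 := ncomp_insert_of_not_conn hc
  rw [isForest, Finset.card_insert_of_notMem he]
  rw [isForest] at hF
  omega

/-- exchange: replacing a bridge on the circuit of `x` preserves connectivity -/
lemma conn_exchange {F : Finset E} {x y : E} (hy : y ∈ F)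
    (hx1 : conn ends F (ends x).1 (ends x).2)
    (hx2 : ¬ conn ends (F.erase y) (ends x).1 (ends x).2) :
    ∀ a b, conn ends (insert x (F.erase y)) a b ↔ conn ends F a b := by
  have hyF : insert y (F.erase y) = F := Finset.insert_erase hy
  -- y's endpoints are connected in insert x (F.erase y)
  have hyconn : conn ends (insert x (F.erase y)) (ends y).1 (ends y).2 := by
    have hx1' : conn ends (insert y (F.erase y)) (ends x).1 (ends x).2 := by rw [hyF]; exact hx1
    rcases conn_insert_iff.mp hx1' with h | ⟨h1, h2⟩ | ⟨h1, h2⟩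
    · exact absurd h hx2
    · -- x.1 ~ y.1, y.2 ~ x.2 in F.erase y ; so y.1 ~ x.1 ~(x)~ x.2 ~ y.2
      have hsub : ∀ a b, conn ends (F.erase y) a b → conn ends (insert x (F.erase y)) a b :=
        fun a b h' => conn_mono (Finset.subset_insert _ _) h'
      have hx : conn ends (insert x (F.erase y)) (ends x).1 (ends x).2 :=
        conn_single (Finset.mem_insert_self _ _)
      exact conn_trans (conn_symm (hsub _ _ h1)) (conn_trans hx (hsub _ _ (conn_symm h2)))
    · have hsub : ∀ a b, conn ends (F.erase y) a b → conn ends (insert x (F.erase y)) a b :=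
        fun a b h' => conn_mono (Finset.subset_insert _ _) h'
      have hx : conn ends (insert x (F.erase y)) (ends x).1 (ends x).2 :=
        conn_single (Finset.mem_insert_self _ _)
      exact conn_trans (hsub _ _ h2) (conn_trans (conn_symm hx) (hsub _ _ h1))
  intro a b
  constructor
  · intro h
    refine conn_of_forall_step ?_ h
    intro f hf
    rcases Finset.mem_insert.mp hf with rfl | hfF
    · exact hx1
    · exact conn_single (Finset.mem_of_mem_erase hfF)
  · intro h
    refine conn_of_forall_step ?_ h
    intro f hf
    by_cases hfy : f = y
    · subst hfy; exact hyconn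
    · exact conn_single (Finset.mem_insert_of_mem (Finset.mem_erase.mpr ⟨hfy, hf⟩))

/-- in a forest, the bridges separating `u` from `v` connect them -/
lemma conn_bridges {F : Finset E} (hF : isForest ends F) {u v : V} (h : conn ends F u v) :
    conn ends (F.filter fun y => ¬ conn ends (F.erase y) u v) u v := by
  induction F using Finset.strongInductionOn with
  | _ F ih =>
  by_cases hall : ∀ y ∈ F, ¬ conn ends (F.erase y) u v
  · have : F.filter (fun y => ¬ conn ends (F.erase y) u v) = F :=
      Finset.filter_true_of_mem hall
    rw [this]; exact h
  · push_neg at hall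
    obtain ⟨y, hyF, hyc⟩ := hall
    have hFy : isForest ends (F.erase y) := isForest_subset hF (Finset.erase_subset _ _)
    have hrec := ih (F.erase y) (Finset.erase_ssubset hyF) hFy hyc
    -- bridges of F.erase y (for u,v) are bridges of F
    have hsub : (F.erase y).filter (fun y' => ¬ conn ends ((F.erase y).erase y') u v) ⊆
        F.filter (fun y' => ¬ conn ends (F.erase y') u v) := by
      intro y' hy'
      rw [Finset.mem_filter] at hy' ⊢
      obtain ⟨hy'F, hy'c⟩ := hy'
      have hy'F' : y' ∈ F := Finset.mem_of_mem_erase hy'F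
      have hyy' : y ≠ y' := fun hh => by subst hh; exact (Finset.mem_erase.mp hy'F).1 rfl
      refine ⟨hy'F', ?_⟩
      intro hcon
      -- conn (F.erase y') u v ; F.erase y' = insert y ((F.erase y).erase y')
      set F0 := (F.erase y).erase y' with hF0
      have hins : insert y F0 = F.erase y' := by
        rw [hF0, Finset.erase_right_comm]
        exact Finset.insert_erase (Finset.mem_erase.mpr ⟨hyy', hyF⟩)
      have hcon' : conn ends (insert y F0) u v := by rw [hins]; exact hcon
      have hnF0 : ¬ conn ends F0 u v := hy'c
      -- also conn (F.erase y) u v = conn (insert y' F0) u v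
      have hins' : insert y' F0 = F.erase y := by
        rw [hF0]
        exact Finset.insert_erase hy'F
      have hcon2 : conn ends (insert y' F0) u v := by rw [hins']; exact hyc
      -- decompose both
      rcases conn_insert_iff.mp hcon' with hA | ⟨hA1, hA2⟩ | ⟨hA1, hA2⟩ <;>
        [skip; rcases conn_insert_iff.mp hcon2 with hB | ⟨hB1, hB2⟩ | ⟨hB1, hB2⟩;
         rcases conn_insert_iff.mp hcon2 with hB | ⟨hB1, hB2⟩ | ⟨hB1, hB2⟩]
      · exact hnF0 hA
      · exact hnF0 hB
      · -- u ~ y.1, y.2 ~ v ; u ~ y'.1, y'.2 ~ v  (in F0)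
        -- then y.1 ~ y'.1, y.2 ~ y'.2, so ends y conn in F.erase y via y'
        apply isForest_bridge hF hyF
        have h1 : conn ends (insert y' F0) (ends y).1 (ends y').1 :=
          conn_mono (Finset.subset_insert _ _) (conn_trans (conn_symm hA1) hB1)
        have h2 : conn ends (insert y' F0) (ends y').2 (ends y).2 :=
          conn_mono (Finset.subset_insert _ _) (conn_trans hB2 (conn_symm hA2))
        have h3 : conn ends (insert y' F0) (ends y').1 (ends y').2 :=
          conn_single (Finset.mem_insert_self _ _)
        rw [← hins']
        exact conn_trans h1 (conn_trans h3 h2)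
      · apply isForest_bridge hF hyF
        have h1 : conn ends (insert y' F0) (ends y).1 (ends y').2 :=
          conn_mono (Finset.subset_insert _ _) (conn_trans (conn_symm hA1) hB1)
        have h2 : conn ends (insert y' F0) (ends y').1 (ends y).2 :=
          conn_mono (Finset.subset_insert _ _) (conn_trans hB2 (conn_symm hA2))
        have h3 : conn ends (insert y' F0) (ends y').1 (ends y').2 :=
          conn_single (Finset.mem_insert_self _ _)
        rw [← hins']
        exact conn_trans h1 (conn_trans (conn_symm h3) h2)
      · exact hnF0 hB
      · apply isForest_bridge hF hyF
        have h1 : conn ends (insert y' F0) (ends y).2 (ends y').1 :=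
          conn_mono (Finset.subset_insert _ _) (conn_trans (conn_symm hA1) hB1)
        have h2 : conn ends (insert y' F0) (ends y').2 (ends y).1 :=
          conn_mono (Finset.subset_insert _ _) (conn_trans hB2 (conn_symm hA2))
        have h3 : conn ends (insert y' F0) (ends y').1 (ends y').2 :=
          conn_single (Finset.mem_insert_self _ _)
        rw [← hins']
        exact conn_symm (conn_trans h1 (conn_trans h3 h2))
      · apply isForest_bridge hF hyF
        have h1 : conn ends (insert y' F0) (ends y).2 (ends y').2 :=
          conn_mono (Finset.subset_insert _ _) (conn_trans (conn_symm hA1) hB1)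
        have h2 : conn ends (insert y' F0) (ends y').1 (ends y).1 :=
          conn_mono (Finset.subset_insert _ _) (conn_trans hB2 (conn_symm hA2))
        have h3 : conn ends (insert y' F0) (ends y').1 (ends y').2 :=
          conn_single (Finset.mem_insert_self _ _)
        rw [← hins']
        exact conn_symm (conn_trans h1 (conn_trans (conn_symm h3) h2))
    exact conn_mono hsub hrec
end Forest

section SEL
variable [Fintype V] [DecidableEq V] [Fintype E] [DecidableEq E] {ends : E → V × V}

open scoped Classical

/-- simultaneous exchange along a family of valid swaps -/
lemma sel (L : List (E × E)) (F : Finset E) (hF : isForest ends F)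
    (hx : ∀ p ∈ L, p.1 ∉ F) (hy : ∀ p ∈ L, p.2 ∈ F)
    (hxnd : (L.map Prod.fst).Nodup) (hynd : (L.map Prod.snd).Nodup)
    (ha : ∀ p ∈ L, conn ends F (ends p.1).1 (ends p.1).2 ∧
      ¬ conn ends (F.erase p.2) (ends p.1).1 (ends p.1).2)
    (hb : L.Pairwise fun p q => conn ends (F.erase q.2) (ends p.1).1 (ends p.1).2) :
    (∀ a b, conn ends ((F \ (L.map Prod.snd).toFinset) ∪ (L.map Prod.fst).toFinset) a b
        ↔ conn ends F a b) ∧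
      ((F \ (L.map Prod.snd).toFinset) ∪ (L.map Prod.fst).toFinset).card = F.card := by
  induction L generalizing F with
  | nil => simp
  | cons p L ih =>
    obtain ⟨hap, hbp⟩ := ha p (List.mem_cons_self)
    have hyp : p.2 ∈ F := hy p (List.mem_cons_self)
    have hxp : p.1 ∉ F := hx p (List.mem_cons_self)
    set F1 := insert p.1 (F.erase p.2) with hF1def
    have hconn1 : ∀ a b, conn ends F1 a b ↔ conn ends F a b :=
      conn_exchange hyp hap hbp
    have hcard1 : F1.card = F.card := by
      rw [hF1def, Finset.card_insert_of_notMem (fun hc => hxp (Finset.mem_of_mem_erase hc)),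
        Finset.card_erase_of_mem hyp]
      have : 0 < F.card := Finset.card_pos.mpr ⟨p.2, hyp⟩
      omega
    have hforest1 : isForest ends F1 := by
      rw [isForest, hcard1, ncomp_congr hconn1]
      exact hF
    -- tail hypotheses
    have hxt : ∀ q ∈ L, q.1 ∉ F1 := by
      intro q hq hmem
      rcases Finset.mem_insert.mp hmem with h | h
      · have : p.1 ∉ L.map Prod.fst := (List.nodup_cons.mp hxnd).1
        exact this (h ▸ List.mem_map_of_mem (f := Prod.fst) hq)
      · exact hx q (List.mem_cons_of_mem _ hq) (Finset.mem_of_mem_erase h)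
    have hyt : ∀ q ∈ L, q.2 ∈ F1 := by
      intro q hq
      have h1 : q.2 ∈ F := hy q (List.mem_cons_of_mem _ hq)
      have h2 : q.2 ≠ p.2 := by
        intro hc
        exact (List.nodup_cons.mp hynd).1 (hc ▸ List.mem_map_of_mem (f := Prod.snd) hq)
      exact Finset.mem_insert_of_mem (Finset.mem_erase.mpr ⟨h2, h1⟩)
    have hp1q2 : ∀ q ∈ L, p.1 ≠ q.2 := by
      intro q hq hc
      exact hxp (hc ▸ hy q (List.mem_cons_of_mem _ hq))
    have herase : ∀ q ∈ L, F1.erase q.2 = insert p.1 ((F.erase p.2).erase q.2) := by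
      intro q hq
      rw [hF1def, Finset.erase_insert_of_ne (hp1q2 q hq)]
    have hat : ∀ q ∈ L, conn ends F1 (ends q.1).1 (ends q.1).2 ∧
        ¬ conn ends (F1.erase q.2) (ends q.1).1 (ends q.1).2 := by
      intro q hq
      have haq := ha q (List.mem_cons_of_mem _ hq)
      refine ⟨(hconn1 _ _).mpr haq.1, ?_⟩
      rw [herase q hq]
      intro hc
      have hbpq : conn ends (F.erase q.2) (ends p.1).1 (ends p.1).2 :=
        (List.pairwise_cons.mp hb).1 q hq
      have hsub0 : (F.erase p.2).erase q.2 ⊆ F.erase q.2 := by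
        intro z hz
        rw [Finset.erase_right_comm] at hz
        exact Finset.mem_of_mem_erase hz
      rcases conn_insert_iff.mp hc with h | ⟨h1, h2⟩ | ⟨h1, h2⟩
      · exact haq.2 (conn_of_forall_step (fun e he => conn_single (hsub0 he)) h)
      · refine haq.2 ?_
        have h1' := conn_mono hsub0 h1
        have h2' := conn_mono hsub0 h2
        exact conn_trans h1' (conn_trans hbpq h2')
      · refine haq.2 ?_
        have h1' := conn_mono hsub0 h1
        have h2' := conn_mono hsub0 h2
        exact conn_trans h1' (conn_trans (conn_symm hbpq) h2')
    have hbt : L.Pairwise fun q r => conn ends (F1.erase r.2) (ends q.1).1 (ends q.1).2 := by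
      have hb' := (List.pairwise_cons.mp hb).2
      have hbp' := (List.pairwise_cons.mp hb).1
      refine List.Pairwise.imp_of_mem ?_ hb'
      intro q r hq hr hqr
      rw [herase r hr]
      -- F0 := (F.erase p.2).erase r.2
      set F0 := (F.erase p.2).erase r.2 with hF0
      have hp2mem : p.2 ∈ F.erase r.2 := by
        refine Finset.mem_erase.mpr ⟨?_, hyp⟩
        intro hc
        exact (List.nodup_cons.mp hynd).1 (hc ▸ List.mem_map_of_mem (f := Prod.snd) hr)
      have hins : insert p.2 F0 = F.erase r.2 := by
        rw [hF0, Finset.erase_right_comm]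
        exact Finset.insert_erase hp2mem
      have hsubp : F0 ⊆ F.erase p.2 := by
        rw [hF0]; exact Finset.erase_subset _ _
      -- p.2's ends are connected in insert p.1 F0
      have hp2conn : conn ends (insert p.1 F0) (ends p.2).1 (ends p.2).2 := by
        have hpr : conn ends (F.erase r.2) (ends p.1).1 (ends p.1).2 := hbp' r hr
        rw [← hins] at hpr
        have hedge : conn ends (insert p.1 F0) (ends p.1).1 (ends p.1).2 :=
          conn_single (Finset.mem_insert_self _ _)
        have hsubi : ∀ a b, conn ends F0 a b → conn ends (insert p.1 F0) a b :=
          fun a b h => conn_mono (Finset.subset_insert _ _) h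
        rcases conn_insert_iff.mp hpr with h | ⟨h1, h2⟩ | ⟨h1, h2⟩
        · exact absurd (conn_mono hsubp h) hbp
        · exact conn_trans (conn_symm (hsubi _ _ h1))
            (conn_trans hedge (hsubi _ _ (conn_symm h2)))
        · exact conn_trans (hsubi _ _ h2) (conn_trans (conn_symm hedge) (hsubi _ _ h1))
      have hq1 : conn ends (F.erase r.2) (ends q.1).1 (ends q.1).2 := hqr
      rw [← hins] at hq1
      have hsubi : ∀ a b, conn ends F0 a b → conn ends (insert p.1 F0) a b :=
        fun a b h => conn_mono (Finset.subset_insert _ _) h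
      rcases conn_insert_iff.mp hq1 with h | ⟨h1, h2⟩ | ⟨h1, h2⟩
      · exact hsubi _ _ h
      · exact conn_trans (hsubi _ _ h1) (conn_trans hp2conn (hsubi _ _ h2))
      · exact conn_trans (hsubi _ _ h1) (conn_trans (conn_symm hp2conn) (hsubi _ _ h2))
    obtain ⟨ih1, ih2⟩ := ih F1 hforest1 hxt hyt (List.nodup_cons.mp hxnd).2
      (List.nodup_cons.mp hynd).2 hat hbt
    -- rewrite the set
    have hset : (F1 \ (L.map Prod.snd).toFinset) ∪ (L.map Prod.fst).toFinset =
        (F \ ((p :: L).map Prod.snd).toFinset) ∪ ((p :: L).map Prod.fst).toFinset := by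
      have hp1ys : p.1 ∉ (L.map Prod.snd).toFinset := by
        intro hc
        rw [List.mem_toFinset, List.mem_map] at hc
        obtain ⟨q, hq, hq2⟩ := hc
        exact hp1q2 q hq hq2.symm
      ext z
      simp only [hF1def, Finset.mem_union, Finset.mem_sdiff, Finset.mem_insert,
        Finset.mem_erase, List.map_cons, List.toFinset_cons, List.mem_toFinset]
      constructor
      · rintro (⟨hz1 | ⟨hz2, hz3⟩, hz4⟩ | hz5)
        · subst hz1; tauto
        · tauto
        · tauto
      · rintro (⟨hz1, hz2⟩ | hz3)
        · rcases not_or.mp hz2 with ⟨hz4, hz5⟩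
          exact Or.inl ⟨Or.inr ⟨hz4, hz1⟩, hz5⟩
        · rcases hz3 with hz3 | hz3
          · exact Or.inl ⟨Or.inl hz3, hz3 ▸ (fun hc => hp1ys (List.mem_toFinset.mpr hc))⟩
          · tauto
    rw [hset] at ih1 ih2
    rw [hcard1] at ih2
    exact ⟨fun a b => (ih1 a b).trans (hconn1 a b), ih2⟩
end SEL

section Splice
variable {α : Type*} {r : α → α → Prop}

lemma zip_tail_map_fst : ∀ (P : List α), (P.zip P.tail).map Prod.fst = P.dropLast
  | [] => rfl
  | [a] => rfl
  | a :: b :: t => by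
    have ih := zip_tail_map_fst (b :: t)
    simp only [List.tail_cons] at ih ⊢
    rw [List.zip_cons_cons, List.map_cons, ih]
    rfl

lemma zip_tail_map_snd : ∀ (P : List α), (P.zip P.tail).map Prod.snd = P.tail
  | [] => rfl
  | [a] => rfl
  | a :: b :: t => by
    have ih := zip_tail_map_snd (b :: t)
    simp only [List.tail_cons] at ih ⊢
    rw [List.zip_cons_cons, List.map_cons, ih]

lemma chain'_getD (d : α) {P : List α} (h : List.Chain' r P) :
    ∀ i, i + 1 < P.length → r (P.getD i d) (P.getD (i+1) d) := by
  intro i hi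
  have h2 := List.isChain_iff_getElem.mp h i (by omega)
  rw [List.getD_eq_getElem _ _ (by omega : i < P.length),
    List.getD_eq_getElem _ _ (by omega : i + 1 < P.length)]
  exact h2

lemma chain'_of_getD (d : α) {P : List α}
    (h : ∀ i, i + 1 < P.length → r (P.getD i d) (P.getD (i+1) d)) : List.Chain' r P := by
  show List.IsChain r P
  rw [List.isChain_iff_getElem]
  intro i hi
  have h2 := h i (by omega)
  rwa [List.getD_eq_getElem _ _ (by omega : i < P.length),
    List.getD_eq_getElem _ _ (by omega : i + 1 < P.length)] at h2

lemma splice_getD (d : α) (P : List α) (s b : ℕ) (hsb : s ≤ b) (hb : b ≤ P.length) :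
    ((P.take s ++ P.drop b).length = s + (P.length - b)) ∧
    (∀ i, i < s → (P.take s ++ P.drop b).getD i d = P.getD i d) ∧
    (∀ i, s ≤ i → i < s + (P.length - b) →
      (P.take s ++ P.drop b).getD i d = P.getD (b + (i - s)) d) := by
  have hs : s ≤ P.length := le_trans hsb hb
  have hlt : (P.take s).length = s := List.length_take_of_le hs
  have hld : (P.drop b).length = P.length - b := List.length_drop
  have hlen : (P.take s ++ P.drop b).length = s + (P.length - b) := by
    rw [List.length_append, hlt, hld]
  refine ⟨hlen, ?_, ?_⟩
  · intro i hi
    have h1 : i < (P.take s ++ P.drop b).length := by omega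
    have h2 : i < P.length := by omega
    rw [List.getD_eq_getElem _ _ h1, List.getD_eq_getElem _ _ h2]
    rw [List.getElem_append_left (by omega : i < (P.take s).length)]
    exact List.getElem_take
  · intro i hi1 hi2
    have h1 : i < (P.take s ++ P.drop b).length := by omega
    have h2 : b + (i - s) < P.length := by omega
    rw [List.getD_eq_getElem _ _ h1, List.getD_eq_getElem _ _ h2]
    rw [List.getElem_append_right (by omega : (P.take s).length ≤ i)]
    have h3 : i - (P.take s).length < (P.drop b).length := by rw [hld, hlt]; omega
    rw [List.getElem_drop (h := h3)]
    congr 1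
    omega

/-- splice out a segment, using a shortcut arc -/
lemma splice_shortcut (d : α) (P : List α) (hP : List.Chain' r P)
    {a b : ℕ} (hab : a + 1 < b) (hb : b < P.length)
    (hr : r (P.getD a d) (P.getD b d)) :
    ∃ Q : List α, List.Chain' r Q ∧ Q.length < P.length ∧ 0 < Q.length ∧
      Q.getD 0 d = P.getD 0 d ∧ Q.getD (Q.length - 1) d = P.getD (P.length - 1) d := by
  obtain ⟨hlen, hg1, hg2⟩ := splice_getD d P (a+1) b (by omega) (by omega)
  have hPc := chain'_getD d hP
  refine ⟨P.take (a+1) ++ P.drop b, ?_, by omega, by omega, ?_, ?_⟩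
  · apply chain'_of_getD d
    intro i hi
    rw [hlen] at hi
    rcases lt_trichotomy i a with h | h | h
    · rw [hg1 i (by omega), hg1 (i+1) (by omega)]
      exact hPc i (by omega)
    · subst h
      rw [hg1 i (by omega), hg2 (i+1) (by omega) (by omega)]
      have hb0 : b + (i + 1 - (i+1)) = b := by omega
      rw [hb0]
      exact hr
    · rw [hg2 i (by omega) (by omega), hg2 (i+1) (by omega) (by omega)]
      have he1 : b + (i + 1 - (a+1)) = (b + (i - (a+1))) + 1 := by omega
      rw [he1]
      exact hPc _ (by omega)
  · rw [hg1 0 (by omega)]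
  · rw [hlen]
    rw [hg2 _ (by omega : a + 1 ≤ a + 1 + (P.length - b) - 1) (by omega)]
    congr 1
    omega

/-- splice out a segment between two duplicate values -/
lemma splice_dup (d : α) (P : List α) (hP : List.Chain' r P)
    {a b : ℕ} (hab : a < b) (hb : b < P.length)
    (hdup : P.getD a d = P.getD b d) :
    ∃ Q : List α, List.Chain' r Q ∧ Q.length < P.length ∧ 0 < Q.length ∧
      Q.getD 0 d = P.getD 0 d ∧ Q.getD (Q.length - 1) d = P.getD (P.length - 1) d := by
  obtain ⟨hlen, hg1, hg2⟩ := splice_getD d P a b (by omega) (by omega)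
  have hPc := chain'_getD d hP
  refine ⟨P.take a ++ P.drop b, ?_, by omega, by omega, ?_, ?_⟩
  · apply chain'_of_getD d
    intro i hi
    rw [hlen] at hi
    rcases lt_trichotomy (i+1) a with h | h | h
    · rw [hg1 i (by omega), hg1 (i+1) (by omega)]
      exact hPc i (by omega)
    · rw [hg1 i (by omega), hg2 (i+1) (by omega) (by omega)]
      have hb0 : b + (i + 1 - a) = b := by omega
      rw [hb0, ← hdup, ← h]
      exact hPc i (by omega)
    · rw [hg2 i (by omega) (by omega), hg2 (i+1) (by omega) (by omega)]
      have he1 : b + (i + 1 - a) = (b + (i - a)) + 1 := by omega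
      rw [he1]
      exact hPc _ (by omega)
  · rcases Nat.eq_zero_or_pos a with h | h
    · subst h
      rw [hg2 0 (le_refl 0) (by omega)]
      simp only [Nat.sub_zero, Nat.add_zero]
      exact hdup.symm
    · exact hg1 0 h
  · rw [hlen]
    rw [hg2 _ (by omega : a ≤ a + (P.length - b) - 1) (by omega)]
    congr 1
    omega
end Splice

section Pack
variable [Fintype V] [DecidableEq V] [Fintype E] [DecidableEq E] {ends : E → V × V}

open scoped Classical

lemma pack_aug [Nonempty V] {k : ℕ} (Allow : Fin k → Finset E)
    (C : ∀ A : Finset E,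
      (∑ i, (ncomp ends (A ∩ Allow i) - 1)) ≤ ((Finset.univ.biUnion Allow) \ A).card)
    (F : Fin k → Finset E) (hsub : ∀ i, F i ⊆ Allow i) (hforest : ∀ i, isForest ends (F i))
    (hdisj : ∀ i j, i ≠ j → Disjoint (F i) (F j))
    (hlt : (∑ i, (F i).card) < k * (Fintype.card V - 1)) :
    ∃ F' : Fin k → Finset E, (∀ i, F' i ⊆ Allow i) ∧ (∀ i, isForest ends (F' i)) ∧
      (∀ i j, i ≠ j → Disjoint (F' i) (F' j)) ∧
      (∑ i, (F' i).card) = (∑ i, (F i).card) + 1 := by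
  classical
  set SFull := Finset.univ.biUnion Allow with hSFull
  set U := Finset.univ.biUnion F with hU
  set arc : E → E → Prop := fun x y => ∃ i, y ∈ F i ∧ x ∈ Allow i ∧ x ∉ F i ∧
    conn ends (F i) (ends x).1 (ends x).2 ∧
    ¬ conn ends ((F i).erase y) (ends x).1 (ends x).2 with harc
  set addable : E → Prop := fun x => ∃ i, x ∈ Allow i ∧ x ∉ F i ∧
    ¬ conn ends (F i) (ends x).1 (ends x).2 with haddable_def
  have huniq : ∀ (i i' : Fin k) (w : E), w ∈ F i → w ∈ F i' → i = i' := by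
    intro i i' w hw hw'
    by_contra hne
    exact (Finset.disjoint_left.mp (hdisj i i' hne)) hw hw'
  have hUmem : ∀ w : E, w ∈ U ↔ ∃ i, w ∈ F i := by
    intro w
    simp [hU, Finset.mem_biUnion]
  have hSFullmem : ∀ w : E, w ∈ SFull ↔ ∃ i, w ∈ Allow i := by
    intro w
    simp [hSFull, Finset.mem_biUnion]
  by_cases hcase : ∃ z, (∃ s, (s ∈ SFull ∧ s ∉ U) ∧ Relation.ReflTransGen arc s z) ∧ addable z
  · -- augmenting path exists
    obtain ⟨z0, ⟨s0, ⟨hs0S, hs0U⟩, hreach⟩, hadd0⟩ := hcase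
    set d := s0 with hd
    set goodP : List E → Prop := fun P => 0 < P.length ∧ List.Chain' arc P ∧
      P.getD 0 d ∈ SFull ∧ P.getD 0 d ∉ U ∧ addable (P.getD (P.length - 1) d) with hgoodP
    have hex : ∃ m, ∃ P, goodP P ∧ P.length = m := by
      obtain ⟨l, hchain, hlast⟩ := List.exists_isChain_cons_of_relationReflTransGen hreach
      refine ⟨(s0 :: l).length, s0 :: l, ⟨by simp, hchain, ?_, ?_, ?_⟩, rfl⟩
      · simpa using hs0S
      · simpa using hs0U
      · have h1 : (s0 :: l).getD ((s0::l).length - 1) d = (s0 :: l).getLast (by simp) := by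
          rw [List.getLast_eq_getElem, List.getD_eq_getElem _ _ (by simp)]
        rw [h1, hlast]
        exact hadd0
    set m₀ := Nat.find hex with hm₀
    obtain ⟨P, hPgood, hPlen⟩ := Nat.find_spec hex
    have hmin : ∀ Q : List E, goodP Q → m₀ ≤ Q.length := by
      intro Q hQ
      exact Nat.find_le ⟨Q, hQ, rfl⟩
    obtain ⟨hPpos, hPchain, hPs1, hPs2, hPadd⟩ := hPgood
    set n₀ := P.length with hn₀
    set f : ℕ → E := fun j => P.getD j d with hf
    have hchain : ∀ j, j + 1 < n₀ → arc (f j) (f (j+1)) := fun j hj => chain'_getD d hPchain j hj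
    have hnodupf : ∀ a b, a < b → b < n₀ → f a ≠ f b := by
      intro a b hab hb hdup
      obtain ⟨Q, hQc, hQlt, hQpos, hQ0, hQl⟩ := splice_dup d P hPchain hab hb hdup
      have : m₀ ≤ Q.length := hmin Q ⟨hQpos, hQc, by rw [hQ0]; exact hPs1,
        by rw [hQ0]; exact hPs2, by rw [hQl]; exact hPadd⟩
      omega
    have hshort : ∀ a b, a + 1 < b → b < n₀ → ¬ arc (f a) (f b) := by
      intro a b hab hb hr
      obtain ⟨Q, hQc, hQlt, hQpos, hQ0, hQl⟩ := splice_shortcut d P hPchain hab hb hr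
      have : m₀ ≤ Q.length := hmin Q ⟨hQpos, hQc, by rw [hQ0]; exact hPs1,
        by rw [hQ0]; exact hPs2, by rw [hQl]; exact hPadd⟩
      omega
    have hPnodup : P.Nodup := by
      rw [List.Nodup]
      rw [List.pairwise_iff_getElem]
      intro i j hi hj hij
      have := hnodupf i j hij hj
      rw [hf] at this
      simp only [List.getD_eq_getElem _ _ hi, List.getD_eq_getElem _ _ hj] at this
      exact this
    -- slot conditions
    have harcslot : ∀ (i : Fin k) (j : ℕ), j + 1 < n₀ → f (j+1) ∈ F i →
        (f j ∈ Allow i ∧ f j ∉ F i ∧ conn ends (F i) (ends (f j)).1 (ends (f j)).2 ∧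
          ¬ conn ends ((F i).erase (f (j+1))) (ends (f j)).1 (ends (f j)).2) := by
      intro i j hj hmem
      obtain ⟨i₀, hy, hal, hnf, hc, hnc⟩ := hchain j hj
      have : i₀ = i := huniq i₀ i _ hy hmem
      subst this
      exact ⟨hal, hnf, hc, hnc⟩
    -- pairs
    set pairs := P.zip P.tail with hpairs
    have hpairslen : pairs.length = n₀ - 1 := by
      rw [hpairs, List.length_zip, List.length_tail]
      omega
    have hpairsget : ∀ j (h : j < pairs.length), pairs[j] = (f j, f (j+1)) := by
      intro j h
      have hj1 : j < P.length := by omega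
      have hjt : j < P.tail.length := by rw [List.length_tail]; omega
      have e1 : f j = P[j] := List.getD_eq_getElem _ _ hj1
      have e2 : f (j+1) = P[j+1] := List.getD_eq_getElem _ _ (by omega : j + 1 < P.length)
      show (P.zip P.tail)[j]'h = (f j, f (j+1))
      rw [List.getElem_zip, e1, e2]
      have h1 : P.tail[j]'hjt = P[j+1] := List.getElem_tail _
      rw [h1]
    have hpairsmem : ∀ p ∈ pairs, ∃ j, j + 1 < n₀ ∧ p = (f j, f (j+1)) := by
      intro p hp
      obtain ⟨j, hj, hpj⟩ := List.mem_iff_getElem.mp hp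
      exact ⟨j, by omega, by rw [← hpj, hpairsget j hj]⟩
    have hpairsmem' : ∀ j, j + 1 < n₀ → (f j, f (j+1)) ∈ pairs := by
      intro j hj
      have hjp : j < pairs.length := by omega
      rw [← hpairsget j hjp]
      exact List.getElem_mem _
    -- per-slot swap lists
    set L : Fin k → List (E × E) := fun i => pairs.filter (fun p => decide (p.2 ∈ F i)) with hL
    have hLmem : ∀ (i : Fin k) p, p ∈ L i ↔ p ∈ pairs ∧ p.2 ∈ F i := by
      intro i p
      rw [hL, List.mem_filter]
      simp
    -- xs and ys finsets
    set xsF : Fin k → Finset E := fun i => ((L i).map Prod.fst).toFinset with hxsF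
    set ysF : Fin k → Finset E := fun i => ((L i).map Prod.snd).toFinset with hysF
    have hxsmem : ∀ (i : Fin k) (w : E),
        w ∈ xsF i ↔ ∃ j, j + 1 < n₀ ∧ w = f j ∧ f (j+1) ∈ F i := by
      intro i w
      rw [hxsF, List.mem_toFinset, List.mem_map]
      constructor
      · rintro ⟨p, hp, rfl⟩
        rw [hLmem] at hp
        obtain ⟨j, hj, rfl⟩ := hpairsmem p hp.1
        exact ⟨j, hj, rfl, hp.2⟩
      · rintro ⟨j, hj, rfl, hmem⟩
        exact ⟨(f j, f (j+1)), (hLmem i _).mpr ⟨hpairsmem' j hj, hmem⟩, rfl⟩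
    have hysmem : ∀ (i : Fin k) (w : E),
        w ∈ ysF i ↔ ∃ j, j + 1 < n₀ ∧ w = f (j+1) ∧ f (j+1) ∈ F i := by
      intro i w
      rw [hysF, List.mem_toFinset, List.mem_map]
      constructor
      · rintro ⟨p, hp, rfl⟩
        rw [hLmem] at hp
        obtain ⟨j, hj, rfl⟩ := hpairsmem p hp.1
        exact ⟨j, hj, rfl, hp.2⟩
      · rintro ⟨j, hj, rfl, hmem⟩
        exact ⟨(f j, f (j+1)), (hLmem i _).mpr ⟨hpairsmem' j hj, hmem⟩, rfl⟩
    -- SEL hypotheses and application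
    have hSEL : ∀ i : Fin k,
        (∀ a b, conn ends ((F i \ ysF i) ∪ xsF i) a b ↔ conn ends (F i) a b) ∧
          ((F i \ ysF i) ∪ xsF i).card = (F i).card := by
      intro i
      have hx : ∀ p ∈ L i, p.1 ∉ F i := by
        intro p hp
        rw [hLmem] at hp
        obtain ⟨j, hj, rfl⟩ := hpairsmem p hp.1
        exact (harcslot i j hj hp.2).2.1
      have hy : ∀ p ∈ L i, p.2 ∈ F i := fun p hp => ((hLmem i p).mp hp).2
      have hxnd : ((L i).map Prod.fst).Nodup := by
        have h1 : List.Sublist ((L i).map Prod.fst) (pairs.map Prod.fst) :=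
          List.Sublist.map Prod.fst (List.filter_sublist (l := pairs))
        have h2 : pairs.map Prod.fst = P.dropLast := zip_tail_map_fst P
        refine List.Nodup.sublist h1 ?_
        rw [h2]
        exact List.Nodup.sublist (List.dropLast_sublist P) hPnodup
      have hynd : ((L i).map Prod.snd).Nodup := by
        have h1 : List.Sublist ((L i).map Prod.snd) (pairs.map Prod.snd) :=
          List.Sublist.map Prod.snd (List.filter_sublist (l := pairs))
        have h2 : pairs.map Prod.snd = P.tail := zip_tail_map_snd P
        refine List.Nodup.sublist h1 ?_
        rw [h2]
        exact List.Nodup.sublist (List.tail_sublist P) hPnodup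
      have ha : ∀ p ∈ L i, conn ends (F i) (ends p.1).1 (ends p.1).2 ∧
          ¬ conn ends ((F i).erase p.2) (ends p.1).1 (ends p.1).2 := by
        intro p hp
        rw [hLmem] at hp
        obtain ⟨j, hj, rfl⟩ := hpairsmem p hp.1
        exact ⟨(harcslot i j hj hp.2).2.2.1, (harcslot i j hj hp.2).2.2.2⟩
      have hbpairs : pairs.Pairwise (fun p q => p.2 ∈ F i → q.2 ∈ F i →
          conn ends ((F i).erase q.2) (ends p.1).1 (ends p.1).2) := by
        rw [List.pairwise_iff_getElem]
        intro a b ha' hb' hab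
        rw [hpairsget a ha', hpairsget b hb']
        intro hp hq
        by_contra hno
        refine hshort a (b+1) (by omega) (by omega) ?_
        exact ⟨i, hq, (harcslot i a (by omega) hp).1, (harcslot i a (by omega) hp).2.1,
          (harcslot i a (by omega) hp).2.2.1, hno⟩
      have hb : (L i).Pairwise (fun p q =>
          conn ends ((F i).erase q.2) (ends p.1).1 (ends p.1).2) := by
        have hsubl : List.Sublist (L i) pairs := List.filter_sublist (l := pairs)
        have h1 := List.Pairwise.sublist hsubl hbpairs
        refine List.Pairwise.imp_of_mem ?_ h1
        intro p q hp hq h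
        exact h ((hLmem i p).mp hp).2 ((hLmem i q).mp hq).2
      exact sel (L i) (F i) (hforest i) hx hy hxnd hynd ha hb
    set G : Fin k → Finset E := fun i => (F i \ ysF i) ∪ xsF i with hG
    -- the new edge
    set z := f (n₀ - 1) with hz
    have hPadd' : ∃ i, z ∈ Allow i ∧ z ∉ F i ∧
        ¬ conn ends (F i) (ends z).1 (ends z).2 := hPadd
    obtain ⟨istar, hzAllow, hzF, hzconn⟩ := hPadd'
    -- basic facts
    have key1 : ∀ (j : ℕ) (i : Fin k), j < n₀ → f j ∈ F i → 1 ≤ j ∧ f j ∈ ysF i := by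
      intro j i hj hmem
      rcases Nat.eq_zero_or_pos j with rfl | hjpos
      · exact absurd ((hUmem (f 0)).mpr ⟨i, hmem⟩) hPs2
      · refine ⟨hjpos, (hysmem i (f j)).mpr ⟨j - 1, by omega, ?_, ?_⟩⟩
        · rw [show j - 1 + 1 = j from by omega]
        · rw [show j - 1 + 1 = j from by omega]; exact hmem
    have hzxs : ∀ i, z ∉ xsF i := by
      intro i hmem
      rw [hxsmem] at hmem
      obtain ⟨j, hj, hje, _⟩ := hmem
      exact hnodupf j (n₀ - 1) (by omega) (by omega) hje.symm
    have hzGall : ∀ i, z ∉ G i := by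
      intro i hmem
      rw [hG] at hmem
      rcases Finset.mem_union.mp hmem with h | h
      · obtain ⟨hmem1, hmem2⟩ := Finset.mem_sdiff.mp h
        exact hmem2 (key1 (n₀ - 1) i (by omega) hmem1).2
      · exact hzxs i h
    have hGdisj : ∀ i j, i ≠ j → Disjoint (G i) (G j) := by
      intro i j hij
      rw [Finset.disjoint_left]
      intro w hwi hwj
      rcases Finset.mem_union.mp hwi with h1 | h1 <;> rcases Finset.mem_union.mp hwj with h2 | h2
      · exact hij (huniq i j w (Finset.mem_sdiff.mp h1).1 (Finset.mem_sdiff.mp h2).1)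
      · obtain ⟨j₀, hj₀, rfl, hmem⟩ := (hxsmem j w).mp h2
        obtain ⟨hwF, hwys⟩ := Finset.mem_sdiff.mp h1
        exact hwys (key1 j₀ i (by omega) hwF).2
      · obtain ⟨j₀, hj₀, rfl, hmem⟩ := (hxsmem i w).mp h1
        obtain ⟨hwF, hwys⟩ := Finset.mem_sdiff.mp h2
        exact hwys (key1 j₀ j (by omega) hwF).2
      · obtain ⟨j₁, hj₁, hje1, hmem1⟩ := (hxsmem i w).mp h1
        obtain ⟨j₂, hj₂, hje2, hmem2⟩ := (hxsmem j w).mp h2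
        have : j₁ = j₂ := by
          by_contra hne
          rcases lt_or_gt_of_ne hne with h | h
          · exact hnodupf j₁ j₂ h (by omega) (hje1 ▸ hje2 ▸ rfl)
          · exact hnodupf j₂ j₁ h (by omega) (hje2 ▸ hje1 ▸ rfl)
        subst this
        exact hij (huniq i j _ hmem1 hmem2)
    -- the new family
    set F' : Fin k → Finset E := Function.update G istar (insert z (G istar)) with hF'
    have hzG : z ∉ G istar := hzGall istar
    have hGsub : ∀ i, G i ⊆ Allow i := by
      intro i w hw
      rcases Finset.mem_union.mp hw with h | h
      · exact hsub i (Finset.mem_sdiff.mp h).1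
      · obtain ⟨j, hj, rfl, hmem⟩ := (hxsmem i w).mp h
        exact (harcslot i j hj hmem).1
    have hGforest : ∀ i, isForest ends (G i) := by
      intro i
      rw [isForest, (hSEL i).2, ncomp_congr (hSEL i).1]
      exact hforest i
    have hGconnz : ¬ conn ends (G istar) (ends z).1 (ends z).2 := by
      intro hc
      exact hzconn (((hSEL istar).1 _ _).mp hc)
    refine ⟨F', ?_, ?_, ?_, ?_⟩
    · intro i
      rw [hF']
      by_cases hi : i = istar
      · subst hi
        rw [Function.update_self]
        intro w hw
        rcases Finset.mem_insert.mp hw with rfl | hw'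
        · exact hzAllow
        · exact hGsub i hw'
      · rw [Function.update_of_ne hi]
        exact hGsub i
    · intro i
      rw [hF']
      by_cases hi : i = istar
      · subst hi
        rw [Function.update_self]
        exact isForest_insert (hGforest i) hzG hGconnz
      · rw [Function.update_of_ne hi]
        exact hGforest i
    · intro i j hij
      rw [hF']
      by_cases hi : i = istar <;> by_cases hj : j = istar
      · exact absurd (hi.trans hj.symm) hij
      · rw [hi] at hij ⊢
        rw [Function.update_self, Function.update_of_ne hj]
        rw [Finset.disjoint_left]
        intro w hw
        rcases Finset.mem_insert.mp hw with rfl | hw'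
        · exact hzGall j
        · exact Finset.disjoint_left.mp (hGdisj istar j hij) hw'
      · rw [hj] at hij ⊢
        rw [Function.update_self, Function.update_of_ne hi]
        rw [Finset.disjoint_right]
        intro w hw
        rcases Finset.mem_insert.mp hw with rfl | hw'
        · exact hzGall i
        · exact Finset.disjoint_right.mp (hGdisj i istar hij) hw'
      · rw [Function.update_of_ne hi, Function.update_of_ne hj]
        exact hGdisj i j hij
    · have hcards : ∀ i : Fin k, (F' i).card =
          (G i).card + (if i = istar then 1 else 0) := by
        intro i
        rw [hF']
        by_cases hi : i = istar
        · rw [hi, Function.update_self, if_pos rfl, Finset.card_insert_of_notMem hzG]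
        · rw [Function.update_of_ne hi, if_neg hi]
          omega
      have h2 : ∑ i, (G i).card = ∑ i, (F i).card :=
        Finset.sum_congr rfl (fun i _ => (hSEL i).2)
      calc ∑ i, (F' i).card
          = ∑ i, ((G i).card + if i = istar then 1 else 0) :=
            Finset.sum_congr rfl (fun i _ => hcards i)
        _ = (∑ i, (G i).card) + ∑ i, (if i = istar then 1 else 0) :=
            Finset.sum_add_distrib
        _ = (∑ i, (F i).card) + 1 := by
            rw [h2]
            congr 1
            simp
  · -- no augmenting path: derive a contradiction with the condition C
    exfalso
    push_neg at hcase
    set R := SFull.filter (fun e => ∃ s, (s ∈ SFull ∧ s ∉ U) ∧ Relation.ReflTransGen arc s e)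
      with hR
    have r1 : ∀ e, e ∈ SFull → e ∉ U → e ∈ R := by
      intro e h1 h2
      rw [hR, Finset.mem_filter]
      exact ⟨h1, e, ⟨h1, h2⟩, Relation.ReflTransGen.refl⟩
    have r2 : ∀ e ∈ R, ∀ y, arc e y → y ∈ R := by
      intro e he y hay
      rw [hR, Finset.mem_filter] at he ⊢
      obtain ⟨heS, s, hs, hrt⟩ := he
      obtain ⟨i, hyF, -, -, -, -⟩ := id hay
      refine ⟨(hSFullmem y).mpr ⟨i, hsub i hyF⟩, s, hs, hrt.tail hay⟩
    have r3 : ∀ e ∈ R, ¬ addable e := by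
      intro e he
      rw [hR, Finset.mem_filter] at he
      exact hcase e he.2
    -- each slot: edges of R ∩ Allow i are spanned by F i ∩ R
    have hkey : ∀ (i : Fin k), ∀ e ∈ R ∩ Allow i,
        conn ends (F i ∩ R) (ends e).1 (ends e).2 := by
      intro i e he
      obtain ⟨heR, heA⟩ := Finset.mem_inter.mp he
      by_cases heF : e ∈ F i
      · exact conn_single (Finset.mem_inter.mpr ⟨heF, heR⟩)
      · have hconn : conn ends (F i) (ends e).1 (ends e).2 := by
          by_contra hnc
          exact r3 e heR ⟨i, heA, heF, hnc⟩
        have hbr := conn_bridges (hforest i) hconn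
        refine conn_mono ?_ hbr
        intro y hy
        rw [Finset.mem_filter] at hy
        refine Finset.mem_inter.mpr ⟨hy.1, r2 e heR y ?_⟩
        exact ⟨i, hy.1, heA, heF, hconn, hy.2⟩
    have hncompi : ∀ i : Fin k, ncomp ends (F i ∩ R) ≤ ncomp ends (R ∩ Allow i) := by
      intro i
      apply ncomp_le_of_le
      intro a b hab
      exact conn_of_forall_step (fun e he => hkey i e he) hab
    have hforesti : ∀ i : Fin k, ncomp ends (F i ∩ R) + (F i ∩ R).card = Fintype.card V :=
      fun i => isForest_subset (hforest i) (Finset.inter_subset_left)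
    have hcardle : ∀ i : Fin k, (F i).card + 1 ≤ Fintype.card V := by
      intro i
      have h1 := hforest i
      rw [isForest] at h1
      have h2 := ncomp_pos (ends := ends) (F i)
      omega
    have hFsplit : ∀ i : Fin k, (F i ∩ R).card + (F i \ R).card = (F i).card :=
      fun i => Finset.card_inter_add_card_sdiff (F i) R
    -- per-slot inequality
    have hperi : ∀ i : Fin k, (ncomp ends (R ∩ Allow i) - 1) + (F i).card ≥
        (Fintype.card V - 1) + (F i \ R).card := by
      intro i
      have h1 := hncompi i
      have h2 := hforesti i
      have h3 := hFsplit i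
      have h4 := hcardle i
      have h5 : 1 ≤ ncomp ends (R ∩ Allow i) := ncomp_pos _
      have h6 : 1 ≤ Fintype.card V := Fintype.card_pos
      omega
    have hsum1 : (∑ i, (ncomp ends (R ∩ Allow i) - 1)) + (∑ i, (F i).card) ≥
        k * (Fintype.card V - 1) + ∑ i, (F i \ R).card := by
      have := Finset.sum_le_sum (fun i (_ : i ∈ Finset.univ) => hperi i)
      rw [Finset.sum_add_distrib, Finset.sum_add_distrib] at this
      have hc : ∑ _i : Fin k, (Fintype.card V - 1) = k * (Fintype.card V - 1) := by
        rw [Finset.sum_const, Finset.card_univ, Fintype.card_fin, smul_eq_mul]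
      omega
    -- SFull \ R is covered by the F i \ R
    have hcover : SFull \ R ⊆ Finset.univ.biUnion (fun i => F i \ R) := by
      intro e he
      obtain ⟨heS, heR⟩ := Finset.mem_sdiff.mp he
      have heU : e ∈ U := by
        by_contra h
        exact heR (r1 e heS h)
      obtain ⟨i, hi⟩ := (hUmem e).mp heU
      exact Finset.mem_biUnion.mpr ⟨i, Finset.mem_univ i, Finset.mem_sdiff.mpr ⟨hi, heR⟩⟩
    have hcover2 : (SFull \ R).card ≤ ∑ i, (F i \ R).card :=
      le_trans (Finset.card_le_card hcover) (Finset.card_biUnion_le)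
    have hC := C R
    have hRA : ∀ i : Fin k, R ∩ Allow i = R ∩ Allow i := fun _ => rfl
    omega
end Pack

section PackMain
variable [Fintype V] [DecidableEq V] [Fintype E] [DecidableEq E] {ends : E → V × V}

open scoped Classical

lemma pack_rec [Nonempty V] {k : ℕ} (Allow : Fin k → Finset E)
    (C : ∀ A : Finset E,
      (∑ i, (ncomp ends (A ∩ Allow i) - 1)) ≤ ((Finset.univ.biUnion Allow) \ A).card) :
    ∀ (dcnt : ℕ) (F : Fin k → Finset E), (∀ i, F i ⊆ Allow i) → (∀ i, isForest ends (F i)) →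
    (∀ i j, i ≠ j → Disjoint (F i) (F j)) →
    (∑ i, (F i).card) + dcnt = k * (Fintype.card V - 1) →
    ∃ T : Fin k → Finset E, (∀ i, T i ⊆ Allow i ∧ ncomp ends (T i) = 1 ∧
      (T i).card + 1 = Fintype.card V) ∧ (∀ i j, i ≠ j → Disjoint (T i) (T j)) := by
  intro dcnt
  induction dcnt with
  | zero =>
    intro F hsub hforest hdisj hsum
    refine ⟨F, fun i => ⟨hsub i, ?_, ?_⟩, hdisj⟩ <;>
    · have hle : ∀ j : Fin k, (F j).card ≤ Fintype.card V - 1 := by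
        intro j
        have h1 := hforest j
        rw [isForest] at h1
        have h2 := ncomp_pos (ends := ends) (F j)
        omega
      have heq : (F i).card = Fintype.card V - 1 := by
        by_contra hne
        have hlt : (F i).card < Fintype.card V - 1 := lt_of_le_of_ne (hle i) hne
        have : (∑ j, (F j).card) < ∑ _j : Fin k, (Fintype.card V - 1) :=
          Finset.sum_lt_sum (fun j _ => hle j) ⟨i, Finset.mem_univ i, hlt⟩
        rw [Finset.sum_const, Finset.card_univ, Fintype.card_fin, smul_eq_mul] at this
        omega
      have h1 := hforest i
      rw [isForest] at h1
      have h2 := ncomp_pos (ends := ends) (F i)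
      have h3 : 1 ≤ Fintype.card V := Fintype.card_pos
      omega
  | succ d ih =>
    intro F hsub hforest hdisj hsum
    obtain ⟨F', h1, h2, h3, h4⟩ := pack_aug Allow C F hsub hforest hdisj (by omega)
    exact ih F' h1 h2 h3 (by omega)

/-- The packing theorem: given the partition-type condition, there exist `k` pairwise
disjoint spanning trees with tree `i` inside `Allow i`. -/
lemma pack [Nonempty V] {k : ℕ} (Allow : Fin k → Finset E)
    (C : ∀ A : Finset E,
      (∑ i, (ncomp ends (A ∩ Allow i) - 1)) ≤ ((Finset.univ.biUnion Allow) \ A).card) :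
    ∃ T : Fin k → Finset E, (∀ i, T i ⊆ Allow i ∧ ncomp ends (T i) = 1 ∧
      (T i).card + 1 = Fintype.card V) ∧ (∀ i j, i ≠ j → Disjoint (T i) (T j)) := by
  refine pack_rec Allow C (k * (Fintype.card V - 1)) (fun _ => ∅) (fun i => Finset.empty_subset _)
    (fun i => isForest_empty) (fun i j _ => Finset.disjoint_empty_left _) ?_
  simp
end PackMain

section Counting
variable [Fintype V] [DecidableEq V] [Fintype E] [DecidableEq E] {ends : E → V × V}

open scoped Classical

lemma mconn_iff_ncomp (hn : 0 < Fintype.card V) (S : Finset E) :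
    MConnected ends S ↔ ncomp ends S = 1 := by
  constructor
  · intro h
    have h1 : Nonempty (Quotient (connSetoid ends S)) := by
      have : Nonempty V := Fintype.card_pos_iff.mp hn
      exact ⟨Quotient.mk (connSetoid ends S) (Classical.arbitrary V)⟩
    have h2 : Subsingleton (Quotient (connSetoid ends S)) := by
      constructor
      intro a b
      obtain ⟨u, rfl⟩ := Quotient.exists_rep a
      obtain ⟨v, rfl⟩ := Quotient.exists_rep b
      exact Quotient.sound (h u v)
    rw [ncomp]
    exact Nat.card_eq_one_iff_unique.mpr ⟨h2, h1⟩
  · intro h u v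
    have h2 : Subsingleton (Quotient (connSetoid ends S)) :=
      (Nat.card_eq_one_iff_unique.mp h).1
    have : Quotient.mk (connSetoid ends S) u = Quotient.mk (connSetoid ends S) v :=
      Subsingleton.elim _ _
    exact Quotient.exact this

lemma ncomp_le_union_cross (A D : Finset E) :
    ncomp ends A ≤ ncomp ends (A ∪ D) +
      (D.filter fun e => ¬ conn ends A (ends e).1 (ends e).2).card := by
  induction D using Finset.induction_on with
  | empty => simp
  | @insert e D he ih =>
    have hu : A ∪ insert e D = insert e (A ∪ D) := Finset.union_insert e A D
    by_cases hc : conn ends A (ends e).1 (ends e).2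
    · have h1 : ncomp ends (insert e (A ∪ D)) = ncomp ends (A ∪ D) :=
        ncomp_insert_of_conn (conn_mono Finset.subset_union_left hc)
      have h2 : (insert e D).filter (fun e' => ¬ conn ends A (ends e').1 (ends e').2) =
          D.filter (fun e' => ¬ conn ends A (ends e').1 (ends e').2) :=
        by rw [Finset.filter_insert, if_neg (by simpa using hc)]
      rw [hu, h1, h2]
      exact ih
    · have h1 := ncomp_insert_le (ends := ends) (A ∪ D) e
      have h2 : (insert e D).filter (fun e' => ¬ conn ends A (ends e').1 (ends e').2) =
          insert e (D.filter (fun e' => ¬ conn ends A (ends e').1 (ends e').2)) :=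
        by rw [Finset.filter_insert, if_pos (by simpa using hc)]
      have h3 : e ∉ D.filter (fun e' => ¬ conn ends A (ends e').1 (ends e').2) :=
        fun hmem => he (Finset.mem_of_mem_filter _ hmem)
      rw [hu, h2, Finset.card_insert_of_notMem h3]
      omega

lemma tree_cross_bound (hn : 0 < Fintype.card V) {T : Finset E} (hT : MConnected ends T)
    (A : Finset E) :
    ncomp ends A ≤ 1 + (T.filter fun e => ¬ conn ends A (ends e).1 (ends e).2).card := by
  have h1 := ncomp_le_union_cross (ends := ends) A T
  have h2 : ncomp ends (A ∪ T) = 1 := by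
    have h3 : MConnected ends (A ∪ T) := fun u v =>
      conn_mono (Finset.subset_union_right) (hT u v)
    exact (mconn_iff_ncomp hn _).mp h3
  omega

/-- from `M` disjoint spanning trees: many edges cross the components of any `A` -/
lemma trees_cross_bound (hn : 0 < Fintype.card V) {M : ℕ} {TT : Fin M → Finset E}
    (hTT : ∀ i, TT i ⊆ Finset.univ ∧ IsSpanningTree ends (TT i))
    (hdisj : ∀ i j, i ≠ j → Disjoint (TT i) (TT j)) (A : Finset E) :
    M * (ncomp ends A - 1) ≤
      (Finset.univ.filter fun e => ¬ conn ends A (ends e).1 (ends e).2).card := by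
  classical
  have hper : ∀ i : Fin M,
      ncomp ends A - 1 ≤ ((TT i).filter fun e => ¬ conn ends A (ends e).1 (ends e).2).card := by
    intro i
    have := tree_cross_bound hn (hTT i).2.1 A
    omega
  have hsum : ∑ i : Fin M, ((TT i).filter fun e => ¬ conn ends A (ends e).1 (ends e).2).card ≤
      (Finset.univ.filter fun e => ¬ conn ends A (ends e).1 (ends e).2).card := by
    rw [← Finset.card_biUnion]
    · apply Finset.card_le_card
      intro e he
      obtain ⟨i, _, hi⟩ := Finset.mem_biUnion.mp he
      exact Finset.mem_filter.mpr ⟨Finset.mem_univ e, (Finset.mem_filter.mp hi).2⟩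
    · intro i _ j _ hij
      exact Finset.disjoint_filter_filter (hdisj i j hij)
  calc M * (ncomp ends A - 1) = ∑ _i : Fin M, (ncomp ends A - 1) := by
        rw [Finset.sum_const, Finset.card_univ, Fintype.card_fin, smul_eq_mul]
    _ ≤ ∑ i : Fin M, ((TT i).filter fun e => ¬ conn ends A (ends e).1 (ends e).2).card :=
        Finset.sum_le_sum (fun i _ => hper i)
    _ ≤ _ := hsum

/-- number of edges crossing a vertex set -/
noncomputable def cutcard (ends : E → V × V) (Y : Finset V) : ℕ :=
  (Finset.univ.filter fun e : E => ¬(((ends e).1 ∈ Y) ↔ ((ends e).2 ∈ Y))).card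

lemma xor_helper {a b c d : Prop} [Decidable a] [Decidable b] [Decidable c] [Decidable d] :
    (¬((a ∧ ¬c ∨ c ∧ ¬a) ↔ (b ∧ ¬d ∨ d ∧ ¬b))) ↔
      ((¬(a ↔ b) ∧ ¬¬(c ↔ d)) ∨ ((a ↔ b) ∧ ¬(c ↔ d))) := by
  by_cases a <;> by_cases b <;> by_cases c <;> by_cases d <;> simp_all

/-- single flip inequality from maximality of the cut -/
lemma flip_step {X : Finset V} (hmax : ∀ Y : Finset V, cutcard ends Y ≤ cutcard ends X)
    (W : Finset V) :
    (Finset.univ.filter fun e : E => (((ends e).1 ∈ X) ↔ ((ends e).2 ∈ X)) ∧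
      ¬(((ends e).1 ∈ W) ↔ ((ends e).2 ∈ W))).card ≤
    (Finset.univ.filter fun e : E => ¬(((ends e).1 ∈ X) ↔ ((ends e).2 ∈ X)) ∧
      ¬(((ends e).1 ∈ W) ↔ ((ends e).2 ∈ W))).card := by
  classical
  have hXU := hmax (symmDiff X W)
  have hpt : ∀ e : E, (¬(((ends e).1 ∈ symmDiff X W) ↔ ((ends e).2 ∈ symmDiff X W))) ↔
      ((¬(((ends e).1 ∈ X) ↔ ((ends e).2 ∈ X)) ∧ ¬¬(((ends e).1 ∈ W) ↔ ((ends e).2 ∈ W))) ∨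
       ((((ends e).1 ∈ X) ↔ ((ends e).2 ∈ X)) ∧ ¬(((ends e).1 ∈ W) ↔ ((ends e).2 ∈ W)))) := by
    intro e
    simp only [Finset.mem_symmDiff]
    exact xor_helper
  have hXUeq : cutcard ends (symmDiff X W) =
      (Finset.univ.filter fun e : E => ¬(((ends e).1 ∈ X) ↔ ((ends e).2 ∈ X)) ∧
        ¬¬(((ends e).1 ∈ W) ↔ ((ends e).2 ∈ W))).card +
      (Finset.univ.filter fun e : E => (((ends e).1 ∈ X) ↔ ((ends e).2 ∈ X)) ∧
        ¬(((ends e).1 ∈ W) ↔ ((ends e).2 ∈ W))).card := by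
    rw [cutcard, Finset.filter_congr (fun e _ => hpt e), Finset.filter_or,
      Finset.card_union_of_disjoint]
    rw [Finset.disjoint_filter]
    intro e _ h1 h2
    exact h1.1 h2.1
  have hXeq : cutcard ends X =
      (Finset.univ.filter fun e : E => ¬(((ends e).1 ∈ X) ↔ ((ends e).2 ∈ X)) ∧
        ¬¬(((ends e).1 ∈ W) ↔ ((ends e).2 ∈ W))).card +
      (Finset.univ.filter fun e : E => ¬(((ends e).1 ∈ X) ↔ ((ends e).2 ∈ X)) ∧
        ¬(((ends e).1 ∈ W) ↔ ((ends e).2 ∈ W))).card := by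
    rw [cutcard]
    have h1 : (Finset.univ.filter fun e : E => ¬(((ends e).1 ∈ X) ↔ ((ends e).2 ∈ X))) =
        (Finset.univ.filter fun e : E => ¬(((ends e).1 ∈ X) ↔ ((ends e).2 ∈ X)) ∧
          ¬¬(((ends e).1 ∈ W) ↔ ((ends e).2 ∈ W))) ∪
        (Finset.univ.filter fun e : E => ¬(((ends e).1 ∈ X) ↔ ((ends e).2 ∈ X)) ∧
          ¬(((ends e).1 ∈ W) ↔ ((ends e).2 ∈ W))) := by
      rw [← Finset.filter_or]
      apply Finset.filter_congr
      intro e _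
      tauto
    rw [h1, Finset.card_union_of_disjoint]
    rw [Finset.disjoint_filter]
    intro e _ h2 h3
    exact h2.2 h3.2
  omega
end Counting

section FlipSum
variable [Fintype V] [DecidableEq V] [Fintype E] [DecidableEq E] {ends : E → V × V}

open scoped Classical

lemma fin_sum_ite (a b x y : ℕ) :
    (∑ i : Fin (a + b), if (i : ℕ) < a then x else y) = a * x + b * y := by
  rw [Fin.sum_univ_eq_sum_range (fun i => if i < a then x else y) (a+b)]
  induction b with
  | zero =>
    rw [Finset.sum_congr rfl
      (fun i hi => if_pos (by have := Finset.mem_range.mp hi; omega : i < a))]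
    rw [Finset.sum_const, Finset.card_range, smul_eq_mul, Nat.add_zero]
    omega
  | succ n ih =>
    have h1 : a + (n + 1) = (a + n) + 1 := rfl
    rw [h1, Finset.sum_range_succ, ih, if_neg (by omega)]
    ring

/-- summed flip inequality over the components of `A'` -/
lemma flip_sum {X : Finset V} (hmax : ∀ Y : Finset V, cutcard ends Y ≤ cutcard ends X)
    (A' : Finset E) :
    (Finset.univ.filter fun e : E => (((ends e).1 ∈ X) ↔ ((ends e).2 ∈ X)) ∧
      ¬ conn ends A' (ends e).1 (ends e).2).card ≤
    (Finset.univ.filter fun e : E => ¬(((ends e).1 ∈ X) ↔ ((ends e).2 ∈ X)) ∧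
      ¬ conn ends A' (ends e).1 (ends e).2).card := by
  classical
  letI : Fintype (Quotient (connSetoid ends A')) := Fintype.ofFinite _
  set Uq : Quotient (connSetoid ends A') → Finset V :=
    fun qc => Finset.univ.filter (fun v => Quotient.mk (connSetoid ends A') v = qc) with hUq
  have hUqmem : ∀ (v : V) qc, v ∈ Uq qc ↔ Quotient.mk (connSetoid ends A') v = qc := by
    intro v qc
    rw [hUq]
    simp
  have hcount : ∀ S : Finset E,
      (∑ qc, (S.filter fun e => ¬(((ends e).1 ∈ Uq qc) ↔ ((ends e).2 ∈ Uq qc))).card)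
      = 2 * (S.filter fun e => ¬ conn ends A' (ends e).1 (ends e).2).card := by
    intro S
    have h1 : ∀ qc, (S.filter fun e => ¬(((ends e).1 ∈ Uq qc) ↔ ((ends e).2 ∈ Uq qc))).card
        = ∑ e ∈ S, if ¬(((ends e).1 ∈ Uq qc) ↔ ((ends e).2 ∈ Uq qc)) then 1 else 0 :=
      fun qc => Finset.card_filter _ _
    rw [Finset.sum_congr rfl (fun qc _ => h1 qc), Finset.sum_comm]
    have h2 : ∀ e ∈ S, (∑ qc, if ¬(((ends e).1 ∈ Uq qc) ↔ ((ends e).2 ∈ Uq qc)) then 1 else 0)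
        = if ¬ conn ends A' (ends e).1 (ends e).2 then 2 else 0 := by
      intro e _
      by_cases hc : conn ends A' (ends e).1 (ends e).2
      · rw [if_neg (fun h => h hc)]
        apply Finset.sum_eq_zero
        intro qc _
        rw [if_neg]
        intro hbd
        apply hbd
        rw [hUqmem, hUqmem]
        have heq : Quotient.mk (connSetoid ends A') (ends e).1 =
            Quotient.mk (connSetoid ends A') (ends e).2 := Quotient.sound hc
        rw [heq]
      · rw [if_pos hc]
        have hsum : (∑ qc, if ¬(((ends e).1 ∈ Uq qc) ↔ ((ends e).2 ∈ Uq qc)) then 1 else 0)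
            = (Finset.univ.filter fun qc : Quotient (connSetoid ends A') =>
                ¬(((ends e).1 ∈ Uq qc) ↔ ((ends e).2 ∈ Uq qc))).card :=
          (Finset.card_filter _ _).symm
        rw [hsum]
        have hne : Quotient.mk (connSetoid ends A') (ends e).1 ≠
            Quotient.mk (connSetoid ends A') (ends e).2 := fun h => hc (Quotient.exact h)
        have hset : (Finset.univ.filter fun qc : Quotient (connSetoid ends A') =>
            ¬(((ends e).1 ∈ Uq qc) ↔ ((ends e).2 ∈ Uq qc))) =
            {Quotient.mk (connSetoid ends A') (ends e).1,
             Quotient.mk (connSetoid ends A') (ends e).2} := by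
          ext qc
          rw [Finset.mem_filter, Finset.mem_insert, Finset.mem_singleton]
          constructor
          · rintro ⟨-, h⟩
            rw [hUqmem, hUqmem] at h
            by_cases h1 : Quotient.mk (connSetoid ends A') (ends e).1 = qc
            · exact Or.inl h1.symm
            · by_cases h2 : Quotient.mk (connSetoid ends A') (ends e).2 = qc
              · exact Or.inr h2.symm
              · exact absurd (iff_of_false h1 h2) h
          · intro h
            refine ⟨Finset.mem_univ _, ?_⟩
            rw [hUqmem, hUqmem]
            rcases h with rfl | rfl
            · intro h
              exact hne (h.mp rfl).symm
            · intro h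
              exact hne (h.mpr rfl)
        rw [hset, Finset.card_insert_of_notMem (by simpa using hne), Finset.card_singleton]
    rw [Finset.sum_congr rfl h2, Finset.card_filter, Finset.mul_sum]
    exact Finset.sum_congr rfl (fun e _ => by split_ifs <;> ring)
  -- sum the flip inequalities
  have hstep : ∀ qc : Quotient (connSetoid ends A'),
      (Finset.univ.filter fun e : E => (((ends e).1 ∈ X) ↔ ((ends e).2 ∈ X)) ∧
        ¬(((ends e).1 ∈ Uq qc) ↔ ((ends e).2 ∈ Uq qc))).card ≤
      (Finset.univ.filter fun e : E => ¬(((ends e).1 ∈ X) ↔ ((ends e).2 ∈ X)) ∧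
        ¬(((ends e).1 ∈ Uq qc) ↔ ((ends e).2 ∈ Uq qc))).card := fun qc => flip_step hmax (Uq qc)
  have hsum := Finset.sum_le_sum (fun qc (_ : qc ∈ Finset.univ) => hstep qc)
  have hL : (∑ qc, (Finset.univ.filter fun e : E => (((ends e).1 ∈ X) ↔ ((ends e).2 ∈ X)) ∧
      ¬(((ends e).1 ∈ Uq qc) ↔ ((ends e).2 ∈ Uq qc))).card)
      = 2 * ((Finset.univ.filter fun e : E => (((ends e).1 ∈ X) ↔ ((ends e).2 ∈ X)) ∧
          ¬ conn ends A' (ends e).1 (ends e).2)).card := by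
    have h1 := hcount (Finset.univ.filter fun e : E => (((ends e).1 ∈ X) ↔ ((ends e).2 ∈ X)))
    rw [Finset.sum_congr rfl (fun qc _ => by rw [Finset.filter_filter])] at h1
    rw [Finset.filter_filter] at h1
    exact h1
  have hR : (∑ qc, (Finset.univ.filter fun e : E => ¬(((ends e).1 ∈ X) ↔ ((ends e).2 ∈ X)) ∧
      ¬(((ends e).1 ∈ Uq qc) ↔ ((ends e).2 ∈ Uq qc))).card)
      = 2 * ((Finset.univ.filter fun e : E => ¬(((ends e).1 ∈ X) ↔ ((ends e).2 ∈ X)) ∧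
          ¬ conn ends A' (ends e).1 (ends e).2)).card := by
    have h1 := hcount (Finset.univ.filter fun e : E => ¬(((ends e).1 ∈ X) ↔ ((ends e).2 ∈ X)))
    rw [Finset.sum_congr rfl (fun qc _ => by rw [Finset.filter_filter])] at h1
    rw [Finset.filter_filter] at h1
    exact h1
  rw [hL, hR] at hsum
  omega
end FlipSum

/-- Decomposition of an `(m₁+2m₂)`-tree-connected graph into an
`m₁`-tree-connected factor `G₁` and a factor `G₂` whose crossing part `G₂[X, Xᶜ]` is
`m₂`-tree-connected, with exactly `min{k₀, bi(G)}` non-crossing edges in `G₂`. -/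
theorem statement_17 [Fintype V] [DecidableEq V] [Fintype E] [DecidableEq E]
    (ends : E → V × V) (m₁ m₂ k₀ : ℕ) (hk : k₀ ≤ m₂)
    (hG : TreeConnected ends (m₁ + 2 * m₂) (Finset.univ : Finset E)) :
    ∃ G₁ G₂ : Finset E, Disjoint G₁ G₂ ∧ G₁ ∪ G₂ = (Finset.univ : Finset E) ∧
      TreeConnected ends m₁ G₁ ∧
      ∃ X : Finset V,
        TreeConnected ends m₂
          (G₂.filter fun e => ¬(((ends e).1 ∈ X) ↔ ((ends e).2 ∈ X))) ∧
        eIn ends G₂ X + eIn ends G₂ Xᶜ =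
          min k₀ (biIndex ends (Finset.univ : Finset E)) := by
  classical
  rcases Nat.eq_zero_or_pos m₂ with hm2 | hm2
  · subst hm2
    have hk0 : k₀ = 0 := Nat.le_zero.mp hk
    subst hk0
    refine ⟨Finset.univ, ∅, Finset.disjoint_empty_right _, Finset.union_empty _,
      by simpa using hG, ∅, ?_, ?_⟩
    · exact ⟨Fin.elim0, fun i => i.elim0, fun i => i.elim0⟩
    · simp [eIn]
  rcases Nat.eq_zero_or_pos (Fintype.card V) with hV | hV
  · exfalso
    obtain ⟨T, hT, -⟩ := hG
    have := (hT ⟨0, by omega⟩).2.2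
    omega
  haveI hne : Nonempty V := Fintype.card_pos_iff.mp hV
  obtain ⟨TT, hTT, hTTdisj⟩ := hG
  -- choose a maximizing cut X
  obtain ⟨X, -, hmaxX⟩ := Finset.exists_max_image (Finset.univ : Finset (Finset V))
    (cutcard ends) ⟨∅, Finset.mem_univ ∅⟩
  have hmax : ∀ Y : Finset V, cutcard ends Y ≤ cutcard ends X :=
    fun Y => hmaxX Y (Finset.mem_univ Y)
  set crossX := Finset.univ.filter
    (fun e : E => ¬(((ends e).1 ∈ X) ↔ ((ends e).2 ∈ X))) with hcrossX
  set noncrossX := Finset.univ.filter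
    (fun e : E => (((ends e).1 ∈ X) ↔ ((ends e).2 ∈ X))) with hnoncrossX
  set t := min k₀ (biIndex ends (Finset.univ : Finset E)) with ht
  have hsdiff_cross : (Finset.univ : Finset E) \ crossX = noncrossX := by
    rw [hcrossX, hnoncrossX]
    ext e
    simp only [Finset.mem_sdiff, Finset.mem_filter, Finset.mem_univ, true_and]
    tauto
  have hbi_le : biIndex ends (Finset.univ : Finset E) ≤ noncrossX.card := by
    refine Nat.sInf_le ⟨crossX, Finset.filter_subset _ _,
      ⟨X, fun e he => (Finset.mem_filter.mp he).2⟩, ?_⟩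
    rw [hsdiff_cross]
  have ht_le_m2 : t ≤ m₂ := le_trans (min_le_left _ _) hk
  have ht_le_non : t ≤ noncrossX.card := le_trans (min_le_right _ _) hbi_le
  obtain ⟨N, hNsub, hNcard⟩ := Finset.exists_subset_card_eq ht_le_non
  have hNnoncross : ∀ e ∈ N, (((ends e).1 ∈ X) ↔ ((ends e).2 ∈ X)) :=
    fun e he => (Finset.mem_filter.mp (hNsub he)).2
  have hNcross_disj : ∀ e ∈ N, e ∉ crossX := by
    intro e he hc
    exact (Finset.mem_filter.mp hc).2 (hNnoncross e he)
  set SF := (Finset.univ : Finset E) \ N with hSF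
  have hcross_sub_SF : crossX ⊆ SF :=
    fun e he => Finset.mem_sdiff.mpr ⟨Finset.mem_univ e, fun hN => hNcross_disj e hN he⟩
  set Allow : Fin (m₁ + m₂) → Finset E :=
    fun i => if (i : ℕ) < m₁ then SF else crossX with hAllow
  set ground := Finset.univ.biUnion Allow with hground
  have hground_cross : crossX ⊆ ground := by
    intro e he
    refine Finset.mem_biUnion.mpr ⟨⟨m₁, by omega⟩, Finset.mem_univ _, ?_⟩
    simp only [hAllow]
    rw [if_neg (lt_irrefl m₁)]
    exact he
  have hground_SF : m₁ ≠ 0 → SF ⊆ ground := by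
    intro hm1 e he
    refine Finset.mem_biUnion.mpr ⟨⟨0, by omega⟩, Finset.mem_univ _, ?_⟩
    simp only [hAllow]
    rw [if_pos (Nat.pos_of_ne_zero hm1)]
    exact he
  -- the packing condition
  have hC : ∀ A : Finset E,
      (∑ i, (ncomp ends (A ∩ Allow i) - 1)) ≤ ((Finset.univ.biUnion Allow) \ A).card := by
    intro A
    have hsum_eval : (∑ i : Fin (m₁ + m₂), (ncomp ends (A ∩ Allow i) - 1)) =
        m₁ * (ncomp ends (A ∩ SF) - 1) + m₂ * (ncomp ends (A ∩ crossX) - 1) := by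
      have hterm : ∀ i : Fin (m₁+m₂), ncomp ends (A ∩ Allow i) - 1 =
          if (i:ℕ) < m₁ then (ncomp ends (A ∩ SF) - 1) else (ncomp ends (A ∩ crossX) - 1) := by
        intro i
        simp only [hAllow]
        split_ifs <;> rfl
      rw [Finset.sum_congr rfl (fun i _ => hterm i)]
      exact fin_sum_ite _ _ _ _
    rw [hsum_eval]
    set p := ncomp ends (A ∩ SF) with hp
    set q := ncomp ends (A ∩ crossX) with hq
    have hp1 : 1 ≤ p := ncomp_pos _
    have hq1 : 1 ≤ q := ncomp_pos _
    by_cases hcase : (2 * (p - 1) ≤ q - 1) ∨ m₁ = 0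
    · -- use the crossing witness
      set W1 := crossX.filter
        (fun e => ¬ conn ends (A ∩ crossX) (ends e).1 (ends e).2) with hW1
      have hW1sub : W1 ⊆ ground \ A := by
        intro e he
        obtain ⟨heX, heC⟩ := Finset.mem_filter.mp he
        refine Finset.mem_sdiff.mpr ⟨hground_cross heX, ?_⟩
        intro heA
        exact heC (conn_single (Finset.mem_inter.mpr ⟨heA, heX⟩))
      have htr := trees_cross_bound hV hTT hTTdisj (A ∩ crossX)
      have hfs := flip_sum hmax (A ∩ crossX)
      -- split the crossing count
      have hsplit : (Finset.univ.filter
            (fun e : E => ¬ conn ends (A ∩ crossX) (ends e).1 (ends e).2)).card =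
          (Finset.univ.filter fun e : E => (((ends e).1 ∈ X) ↔ ((ends e).2 ∈ X)) ∧
            ¬ conn ends (A ∩ crossX) (ends e).1 (ends e).2).card +
          (Finset.univ.filter fun e : E => ¬(((ends e).1 ∈ X) ↔ ((ends e).2 ∈ X)) ∧
            ¬ conn ends (A ∩ crossX) (ends e).1 (ends e).2).card := by
        have hu : (Finset.univ.filter fun e : E => (((ends e).1 ∈ X) ↔ ((ends e).2 ∈ X)) ∧
              ¬ conn ends (A ∩ crossX) (ends e).1 (ends e).2) ∪
            (Finset.univ.filter fun e : E => ¬(((ends e).1 ∈ X) ↔ ((ends e).2 ∈ X)) ∧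
              ¬ conn ends (A ∩ crossX) (ends e).1 (ends e).2) =
            Finset.univ.filter
              (fun e : E => ¬ conn ends (A ∩ crossX) (ends e).1 (ends e).2) := by
          rw [← Finset.filter_or]
          apply Finset.filter_congr
          intro e _
          tauto
        have hd : Disjoint
            (Finset.univ.filter fun e : E => (((ends e).1 ∈ X) ↔ ((ends e).2 ∈ X)) ∧
              ¬ conn ends (A ∩ crossX) (ends e).1 (ends e).2)
            (Finset.univ.filter fun e : E => ¬(((ends e).1 ∈ X) ↔ ((ends e).2 ∈ X)) ∧
              ¬ conn ends (A ∩ crossX) (ends e).1 (ends e).2) := by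
          rw [Finset.disjoint_filter]
          intro e _ h1 h2
          exact h2.1 h1.1
        rw [← hu, Finset.card_union_of_disjoint hd]
      have hW1eq : W1.card = (Finset.univ.filter
          fun e : E => ¬(((ends e).1 ∈ X) ↔ ((ends e).2 ∈ X)) ∧
            ¬ conn ends (A ∩ crossX) (ends e).1 (ends e).2).card := by
        rw [hW1, hcrossX, Finset.filter_filter]
      have hdouble : (Finset.univ.filter
            (fun e : E => ¬ conn ends (A ∩ crossX) (ends e).1 (ends e).2)).card ≤
          2 * W1.card := by
        rw [hW1eq]
        omega
      have hWcard : m₁ * (p - 1) + m₂ * (q - 1) ≤ W1.card := by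
        have hMq : (m₁ + 2 * m₂) * (q - 1) = m₁ * (q - 1) + 2 * (m₂ * (q - 1)) := by ring
        rcases hcase with h2a | hm10
        · have h3 : m₁ * (2 * (p - 1)) ≤ m₁ * (q - 1) := Nat.mul_le_mul_left m₁ h2a
          have h4 : m₁ * (2 * (p - 1)) = 2 * (m₁ * (p - 1)) := by ring
          have h5 : (m₁ + 2 * m₂) * (q - 1) ≤ 2 * W1.card := le_trans htr hdouble
          linarith
        · subst hm10
          have h5 : (0 + 2 * m₂) * (q - 1) ≤ 2 * W1.card := le_trans htr hdouble
          have h6 : (0 + 2 * m₂) * (q - 1) = 2 * (m₂ * (q - 1)) := by ring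
          have h7 : (0 : ℕ) * (p - 1) = 0 := by ring
          linarith
      exact le_trans hWcard (Finset.card_le_card hW1sub)
    · push_neg at hcase
      obtain ⟨h2a, hm1⟩ := hcase
      set cs := Finset.univ.filter
        (fun e : E => ¬ conn ends (A ∩ SF) (ends e).1 (ends e).2) with hcs
      have htr := trees_cross_bound hV hTT hTTdisj (A ∩ SF)
      have hW2sub : cs \ N ⊆ ground \ A := by
        intro e he
        obtain ⟨hecs, heN⟩ := Finset.mem_sdiff.mp he
        have heSF : e ∈ SF := Finset.mem_sdiff.mpr ⟨Finset.mem_univ e, heN⟩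
        refine Finset.mem_sdiff.mpr ⟨hground_SF hm1 heSF, ?_⟩
        intro heA
        exact (Finset.mem_filter.mp hecs).2
          (conn_single (Finset.mem_inter.mpr ⟨heA, heSF⟩))
      have hcard1 : cs.card ≤ (cs \ N).card + N.card :=
        Finset.card_le_card_sdiff_add_card
      have harith : m₁ * (p - 1) + m₂ * (q - 1) ≤ (cs \ N).card := by
        have hMp : (m₁ + 2 * m₂) * (p - 1) = m₁ * (p - 1) + 2 * (m₂ * (p - 1)) := by ring
        have hqle : q ≤ 2 * (p - 1) := by omega
        have h3 : m₂ * q ≤ m₂ * (2 * (p - 1)) := Nat.mul_le_mul_left m₂ hqle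
        have h4 : m₂ * (2 * (p - 1)) = 2 * (m₂ * (p - 1)) := by ring
        have h5 : m₂ * q = m₂ * (q - 1) + m₂ := by
          have hq' : q - 1 + 1 = q := by omega
          conv_lhs => rw [← hq']
          rw [Nat.mul_succ]
        have h6 : N.card = t := hNcard
        have h7 : t ≤ m₂ := ht_le_m2
        linarith
      exact le_trans harith (Finset.card_le_card hW2sub)
  -- pack!
  obtain ⟨TF, hTF, hTFdisj⟩ := pack Allow hC
  have hAllowTree : ∀ j : Fin m₁, Allow (Fin.castAdd m₂ j) = SF := by
    intro j
    simp only [hAllow]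
    rw [if_pos]
    exact j.isLt
  have hAllowBip : ∀ j : Fin m₂, Allow (Fin.natAdd m₁ j) = crossX := by
    intro j
    simp only [hAllow]
    rw [if_neg]
    simp only [Fin.natAdd]
    omega
  set bipU := Finset.univ.biUnion (fun j : Fin m₂ => TF (Fin.natAdd m₁ j)) with hbipU
  set G₂ := bipU ∪ N with hG₂
  set G₁ := (Finset.univ : Finset E) \ G₂ with hG₁
  have hbip_cross : bipU ⊆ crossX := by
    intro e he
    obtain ⟨j, -, hj⟩ := Finset.mem_biUnion.mp he
    have := (hTF (Fin.natAdd m₁ j)).1 hj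
    rwa [hAllowBip j] at this
  have hG₂filter : G₂.filter (fun e => ¬(((ends e).1 ∈ X) ↔ ((ends e).2 ∈ X))) = bipU := by
    ext e
    rw [Finset.mem_filter]
    constructor
    · rintro ⟨he, hcr⟩
      rcases Finset.mem_union.mp he with h | h
      · exact h
      · exact absurd (hNnoncross e h) hcr
    · intro he
      exact ⟨Finset.mem_union_left _ he, (Finset.mem_filter.mp (hbip_cross he)).2⟩
  have hspan : ∀ i, IsSpanningTree ends (TF i) :=
    fun i => ⟨(mconn_iff_ncomp hV _).mpr (hTF i).2.1, (hTF i).2.2⟩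
  refine ⟨G₁, G₂, Finset.sdiff_disjoint, Finset.sdiff_union_of_subset (Finset.subset_univ _),
    ?_, X, ?_, ?_⟩
  · -- G₁ is m₁-tree-connected
    refine ⟨fun j => TF (Fin.castAdd m₂ j), fun j => ⟨?_, hspan _⟩, ?_⟩
    · intro e he
      have heSF : e ∈ SF := by
        have := (hTF (Fin.castAdd m₂ j)).1 he
        rwa [hAllowTree j] at this
      refine Finset.mem_sdiff.mpr ⟨Finset.mem_univ e, ?_⟩
      intro heG₂
      rcases Finset.mem_union.mp heG₂ with h | h
      · obtain ⟨j', -, hj'⟩ := Finset.mem_biUnion.mp h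
        have hne : Fin.castAdd m₂ j ≠ Fin.natAdd m₁ j' := by
          intro hcontra
          have : (j : ℕ) = m₁ + (j' : ℕ) := by
            have := congrArg Fin.val hcontra
            simpa using this
          have := j.isLt
          omega
        exact Finset.disjoint_left.mp (hTFdisj _ _ hne) he hj'
      · exact (Finset.mem_sdiff.mp heSF).2 h
    · intro i j hij
      refine hTFdisj _ _ (fun h => hij ?_)
      apply Fin.ext
      have := congrArg Fin.val h
      simpa using this
  · -- crossing part of G₂ is m₂-tree-connected
    rw [hG₂filter]
    refine ⟨fun j => TF (Fin.natAdd m₁ j), fun j => ⟨?_, hspan _⟩, ?_⟩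
    · intro e he
      exact Finset.mem_biUnion.mpr ⟨j, Finset.mem_univ j, he⟩
    · intro i j hij
      refine hTFdisj _ _ (fun h => hij ?_)
      apply Fin.ext
      have hval := congrArg Fin.val h
      simp only [Fin.natAdd] at hval
      omega
  · -- the count of non-crossing edges of G₂
    have hfX : G₂.filter (fun e => (ends e).1 ∈ X ∧ (ends e).2 ∈ X) =
        N.filter (fun e => (ends e).1 ∈ X ∧ (ends e).2 ∈ X) := by
      ext e
      rw [Finset.mem_filter, Finset.mem_filter]
      constructor
      · rintro ⟨he, hp⟩
        rcases Finset.mem_union.mp he with h | h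
        · exact absurd (iff_of_true hp.1 hp.2) (Finset.mem_filter.mp (hbip_cross h)).2
        · exact ⟨h, hp⟩
      · rintro ⟨he, hp⟩
        exact ⟨Finset.mem_union_right _ he, hp⟩
    have hfXc : G₂.filter (fun e => (ends e).1 ∈ Xᶜ ∧ (ends e).2 ∈ Xᶜ) =
        N.filter (fun e => (ends e).1 ∈ Xᶜ ∧ (ends e).2 ∈ Xᶜ) := by
      ext e
      rw [Finset.mem_filter, Finset.mem_filter]
      constructor
      · rintro ⟨he, hp⟩
        rcases Finset.mem_union.mp he with h | h
        · rw [Finset.mem_compl, Finset.mem_compl] at hp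
          exact absurd (iff_of_false hp.1 hp.2) (Finset.mem_filter.mp (hbip_cross h)).2
        · exact ⟨h, hp⟩
      · rintro ⟨he, hp⟩
        exact ⟨Finset.mem_union_right _ he, hp⟩
    have hNsplit : (N.filter (fun e => (ends e).1 ∈ X ∧ (ends e).2 ∈ X)).card +
        (N.filter (fun e => (ends e).1 ∈ Xᶜ ∧ (ends e).2 ∈ Xᶜ)).card = N.card := by
      have hcongr : N.filter (fun e => (ends e).1 ∈ Xᶜ ∧ (ends e).2 ∈ Xᶜ) =
          N.filter (fun e => ¬((ends e).1 ∈ X ∧ (ends e).2 ∈ X)) := by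
        apply Finset.filter_congr
        intro e he
        have hnc := hNnoncross e he
        rw [Finset.mem_compl, Finset.mem_compl]
        tauto
      rw [hcongr]
      exact Finset.card_filter_add_card_filter_not _
    rw [eIn, eIn, hfX, hfXc, hNsplit, hNcard]
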